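/- Fix a positive integer k, a partition π of {1,…,2k} all of whose blocks have even cardinality, and a perfect matching π_1 of {1,…,2k}. Let B be a block of π ∨ π_1, let A^{(1)},…,A^{(m)} be the blocks of π contained in B, set 𝔞(β) = #A^{(β)}/2 and 𝔟 = #B/2. Suppose that exactly one β ∈ {1,…,m} satisfies 𝔞(β) ≥ 3 and no β satisfies 𝔞(β) = 2. Then there is a constant C, depending only on k, π and π_1, such that for all n, Σ_{j|_B} Π_{β=1}^{m} |C({Z_{j_α}}_{α ∈ A^{(β)}})| ≤ C · n^{Σ_{β=1}^{m} (𝔞(β)−2)·1[𝔞(β) ≥ 2]}, where the sum runs over all words j|_B = (j_α)_{α∈B} ∈ {1,…,n}^{B} measurable with respect to π_1|_B. -/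

import Mathlib

open MeasureTheory ProbabilityTheory Finset

noncomputable section

instance permMS (n : ℕ) : MeasurableSpace (Equiv.Perm (Fin n)) := ⊤

/-- The uniform probability measure on the set of all `n!` permutations of `{1,…,n}`. -/
def permMeasure (n : ℕ) : Measure (Equiv.Perm (Fin n)) :=
  (PMF.uniformOfFintype (Equiv.Perm (Fin n))).toMeasure

/-- The rank `Q_i` of the random permutation, as a real number in `{1,…,n}`. -/
def Qr (n : ℕ) (i : Fin n) (σ : Equiv.Perm (Fin n)) : ℝ := (σ i : ℕ) + 1

/-- The centralized and normalized rank `Z_i = sqrt(12/(n²−1))·(Q_i − (n+1)/2)`. -/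
def Zr (n : ℕ) (i : Fin n) (σ : Equiv.Perm (Fin n)) : ℝ :=
  Real.sqrt (12 / ((n : ℝ) ^ 2 - 1)) * (Qr n i σ - ((n : ℝ) + 1) / 2)


attribute [local instance] Classical.propDecidable

/-- `P` is a set partition of the (finite) index type `ι`: its blocks are nonempty and
every index lies in exactly one block. -/
def IsSetPartition {ι : Type*} [Fintype ι] (P : Finset (Finset ι)) : Prop :=
  (∀ A ∈ P, A.Nonempty) ∧ ∀ i : ι, ∃! A : Finset ι, A ∈ P ∧ i ∈ A

/-- A perfect matching: a set partition all of whose blocks have two elements. -/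
def IsPerfectMatching {ι : Type*} [Fintype ι] (P : Finset (Finset ι)) : Prop :=
  IsSetPartition P ∧ ∀ A ∈ P, A.card = 2

/-- The joint cumulant `C(ξ_1,…,ξ_N) = Σ_{π} (−1)^{#π−1}(#π−1)! Π_{A∈π} E[Π_{i∈A} ξ_i]`,
where the sum runs over all set partitions of the index set. -/
def jointCumulant {Ω : Type*} [MeasurableSpace Ω] (μ : Measure Ω)
    {ι : Type*} [Fintype ι] (ξ : ι → Ω → ℝ) : ℝ :=
  ∑ P ∈ Finset.univ.filter (fun P : Finset (Finset ι) => IsSetPartition P),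
    (-1 : ℝ) ^ (P.card - 1) * (Nat.factorial (P.card - 1) : ℝ) *
      ∏ A ∈ P, ∫ ω, (∏ i ∈ A, ξ i ω) ∂μ

/-- `E_σ(ξ) = Π_{A∈σ} E[Π_{i∈A} ξ_i]`. -/
def momProd {Ω : Type*} [MeasurableSpace Ω] (μ : Measure Ω)
    {ι : Type*} (P : Finset (Finset ι)) (ξ : ι → Ω → ℝ) : ℝ :=
  ∏ A ∈ P, ∫ ω, (∏ i ∈ A, ξ i ω) ∂μ

/-- `C_π(ξ) = Π_{A∈π} C({ξ_i}_{i∈A})`, the product over the blocks of `π` of the joint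
cumulants of the variables indexed by each block. -/
def cumProd {Ω : Type*} [MeasurableSpace Ω] (μ : Measure Ω)
    {ι : Type*} [Fintype ι] (P : Finset (Finset ι)) (ξ : ι → Ω → ℝ) : ℝ :=
  ∏ A ∈ P, jointCumulant μ (fun a : {x // x ∈ A} => ξ a.1)

/-- The relation generating the join `P ∨ Q` of two set partitions: the equivalence closure
of "lying in a common block of `P` or of `Q`". -/
def joinRel {ι : Type*} (P Q : Finset (Finset ι)) : ι → ι → Prop :=
  Relation.EqvGen fun a b => (∃ A ∈ P, a ∈ A ∧ b ∈ A) ∨ (∃ A ∈ Q, a ∈ A ∧ b ∈ A)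

/-- `B` is a block of the join `P ∨ Q`, i.e. an equivalence class of `joinRel P Q`. -/
def IsJoinBlock {ι : Type*} [Fintype ι] (P Q : Finset (Finset ι)) (B : Finset ι) : Prop :=
  ∃ a : ι, B = Finset.univ.filter (fun b => joinRel P Q a b)

/-- The set of blocks of the join `P ∨ Q`. -/
def joinBlocks {ι : Type*} [Fintype ι] (P Q : Finset (Finset ι)) : Finset (Finset ι) :=
  Finset.univ.filter (fun B : Finset ι => IsJoinBlock P Q B)

/-- `#(P ∨ Q)`, the number of blocks of the join of two set partitions. -/
def joinCard {ι : Type*} [Fintype ι] (P Q : Finset (Finset ι)) : ℕ :=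
  (joinBlocks P Q).card

/-- A word `j` is `π`-measurable if `j_α = j_β` whenever `α, β` lie in the same block. -/
def WordMeasurable {ι κ : Type*} (P : Finset (Finset ι)) (j : ι → κ) : Prop :=
  ∀ A ∈ P, ∀ a ∈ A, ∀ b ∈ A, j a = j b

-- ====== my development ======

instance permMSC (n : ℕ) : MeasurableSingletonClass (Equiv.Perm (Fin n)) := ⟨fun _ => trivial⟩

instance permProb (n : ℕ) : IsProbabilityMeasure (permMeasure n) := PMF.toMeasure.isProbabilityMeasure _

/-- expectation as a finite sum -/
def pE (n : ℕ) (f : Equiv.Perm (Fin n) → ℝ) : ℝ :=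
  (Nat.factorial n : ℝ)⁻¹ * ∑ σ : Equiv.Perm (Fin n), f σ

lemma integral_perm (n : ℕ) (f : Equiv.Perm (Fin n) → ℝ) :
    ∫ σ, f σ ∂(permMeasure n) = pE n f := by
  rw [integral_fintype (Integrable.of_finite)]
  rw [pE, Finset.mul_sum]
  refine Finset.sum_congr rfl fun σ _ => ?_
  rw [measureReal_def, permMeasure, PMF.toMeasure_apply_singleton _ _ (MeasurableSet.singleton σ),
    PMF.uniformOfFintype_apply]
  simp [ENNReal.toReal_inv, smul_eq_mul, Fintype.card_perm, Fintype.card_fin]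

section Cum

variable {ι : Type*} [Fintype ι] [DecidableEq ι]

/-- `P` is a partition of the finset `A`. -/
def IsPartOn (A : Finset ι) (P : Finset (Finset ι)) : Prop :=
  (∀ D ∈ P, D.Nonempty ∧ D ⊆ A) ∧ ∀ a ∈ A, ∃! D : Finset ι, D ∈ P ∧ a ∈ D

def parts (A : Finset ι) : Finset (Finset (Finset ι)) :=
  Finset.univ.filter (fun P => IsPartOn A P)

def muW (P : Finset (Finset ι)) : ℝ :=
  (-1 : ℝ) ^ (P.card - 1) * (Nat.factorial (P.card - 1) : ℝ)

/-- cumulant of the family `ξ i`, `i ∈ A`. -/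
def cum (n : ℕ) (A : Finset ι) (ξ : ι → Equiv.Perm (Fin n) → ℝ) : ℝ :=
  ∑ P ∈ parts A, muW P * ∏ D ∈ P, pE n (fun σ => ∏ i ∈ D, ξ i σ)

end Cum

section Bridge

variable {ι : Type*} [Fintype ι] [DecidableEq ι]

lemma map_subtype_subtype (A : Finset ι) (D : Finset {x // x ∈ A}) :
    (D.map (Function.Embedding.subtype _)).subtype (fun x => x ∈ A) = D := by
  ext a
  simp [Finset.mem_subtype, Finset.mem_map]

lemma subtype_map_of_subset {A D : Finset ι} (h : D ⊆ A) :
    (D.subtype (fun x => x ∈ A)).map (Function.Embedding.subtype _) = D := by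
  rw [Finset.subtype_map]
  exact Finset.filter_true_of_mem fun x hx => h hx

lemma bridge (n : ℕ) (A : Finset ι) (ξ : ι → Equiv.Perm (Fin n) → ℝ) :
    jointCumulant (permMeasure n) (fun a : {x // x ∈ A} => ξ a.1) = cum n A ξ := by
  classical
  rw [jointCumulant, cum]
  refine Finset.sum_nbij'
    (i := fun P => P.image (fun D => D.map (Function.Embedding.subtype _)))
    (j := fun Q => Q.image (fun D => D.subtype (fun x => x ∈ A))) ?_ ?_ ?_ ?_ ?_
  · -- membership forward
    intro P hP
    rw [Finset.mem_filter] at hP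
    obtain ⟨-, hne, huniq⟩ := hP
    rw [parts, Finset.mem_filter]
    refine ⟨Finset.mem_univ _, ?_, ?_⟩
    · intro D hD
      rw [Finset.mem_image] at hD
      obtain ⟨D', hD', rfl⟩ := hD
      constructor
      · obtain ⟨x, hx⟩ := hne D' hD'
        exact ⟨x.1, Finset.mem_map_of_mem _ hx⟩
      · intro x hx
        rw [Finset.mem_map] at hx
        obtain ⟨a, -, rfl⟩ := hx
        exact a.2
    · intro a ha
      obtain ⟨D', ⟨hD'm, hD'a⟩, hu⟩ := huniq ⟨a, ha⟩
      refine ⟨D'.map (Function.Embedding.subtype _),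
        ⟨Finset.mem_image_of_mem _ hD'm, Finset.mem_map_of_mem _ hD'a⟩, ?_⟩
      rintro E ⟨hEm, hEa⟩
      rw [Finset.mem_image] at hEm
      obtain ⟨E', hE', rfl⟩ := hEm
      rw [Finset.mem_map] at hEa
      obtain ⟨b, hb, hba⟩ := hEa
      have : b = ⟨a, ha⟩ := Subtype.ext hba
      subst this
      rw [hu E' ⟨hE', hb⟩]
  · -- membership backward
    intro Q hQ
    rw [parts, Finset.mem_filter] at hQ
    obtain ⟨-, hblk, huniq⟩ := hQ
    rw [Finset.mem_filter]
    refine ⟨Finset.mem_univ _, ?_, ?_⟩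
    · intro D hD
      rw [Finset.mem_image] at hD
      obtain ⟨D', hD', rfl⟩ := hD
      obtain ⟨⟨x, hx⟩, hsub⟩ := hblk D' hD'
      exact ⟨⟨x, hsub hx⟩, by simpa [Finset.mem_subtype] using hx⟩
    · intro a
      obtain ⟨D, ⟨hDm, hDa⟩, hu⟩ := huniq a.1 a.2
      refine ⟨D.subtype _, ⟨Finset.mem_image_of_mem _ hDm, by simpa [Finset.mem_subtype] using hDa⟩, ?_⟩
      rintro E ⟨hEm, hEa⟩
      rw [Finset.mem_image] at hEm
      obtain ⟨E', hE', rfl⟩ := hEm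
      rw [Finset.mem_subtype] at hEa
      rw [hu E' ⟨hE', hEa⟩]
  · -- left inverse
    intro P hP
    rw [Finset.image_image]
    have : ∀ D ∈ P, (fun D => Finset.subtype (fun x => x ∈ A) D) ∘
        (fun D : Finset {x // x ∈ A} => D.map (Function.Embedding.subtype _)) = id → True := by
      intro _ _ _; trivial
    calc P.image ((fun D => Finset.subtype (fun x => x ∈ A) D) ∘
          (fun D : Finset {x // x ∈ A} => D.map (Function.Embedding.subtype _)))
        = P.image id := Finset.image_congr (fun D _ => map_subtype_subtype A D)
      _ = P := Finset.image_id
  · -- right inverse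
    intro Q hQ
    rw [parts, Finset.mem_filter] at hQ
    obtain ⟨-, hblk, -⟩ := hQ
    rw [Finset.image_image]
    calc Q.image _ = Q.image id :=
        Finset.image_congr (fun D hD => subtype_map_of_subset (hblk D hD).2)
      _ = Q := Finset.image_id
  · -- values agree
    intro P hP
    rw [Finset.mem_filter] at hP
    obtain ⟨-, hne, huniq⟩ := hP
    have hinj : ∀ D₁ ∈ P, ∀ D₂ ∈ P,
        D₁.map (Function.Embedding.subtype (fun x => x ∈ A)) =
        D₂.map (Function.Embedding.subtype _) → D₁ = D₂ := by
      intro D₁ _ D₂ _ h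
      exact Finset.map_injective _ h
    rw [muW, Finset.card_image_of_injOn hinj]
    congr 1
    rw [Finset.prod_image hinj]
    refine Finset.prod_congr rfl fun D hD => ?_
    rw [integral_perm]
    congr 1
    funext σ
    rw [Finset.prod_map]
    rfl

end Bridge
section PartsTools

variable {ι : Type*} [Fintype ι] [DecidableEq ι]

lemma mem_parts {A : Finset ι} {P : Finset (Finset ι)} : P ∈ parts A ↔ IsPartOn A P := by
  rw [parts, Finset.mem_filter]
  exact ⟨fun h => h.2, fun h => ⟨Finset.mem_univ _, h⟩⟩

lemma IsPartOn.nonempty_of {A : Finset ι} {P : Finset (Finset ι)} (hP : IsPartOn A P)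
    (hA : A.Nonempty) : P.Nonempty := by
  obtain ⟨a, ha⟩ := hA
  obtain ⟨D, ⟨hD, -⟩, -⟩ := hP.2 a ha
  exact ⟨D, hD⟩

lemma IsPartOn.unique_block {A : Finset ι} {P : Finset (Finset ι)} (hP : IsPartOn A P)
    {a : ι} (ha : a ∈ A) {D E : Finset ι} (hD : D ∈ P) (haD : a ∈ D)
    (hE : E ∈ P) (haE : a ∈ E) : D = E := by
  obtain ⟨F, -, hu⟩ := hP.2 a ha
  rw [hu D ⟨hD, haD⟩, hu E ⟨hE, haE⟩]

/-- the block of `P` containing `a` -/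
def blockOf (P : Finset (Finset ι)) (a : ι) : Finset ι :=
  if h : ∃ D ∈ P, a ∈ D then h.choose else ∅

lemma blockOf_mem {P : Finset (Finset ι)} {a : ι} (h : ∃ D ∈ P, a ∈ D) :
    blockOf P a ∈ P ∧ a ∈ blockOf P a := by
  rw [blockOf, dif_pos h]
  exact ⟨h.choose_spec.1, h.choose_spec.2⟩

lemma IsPartOn.blockOf_spec {A : Finset ι} {P : Finset (Finset ι)} (hP : IsPartOn A P)
    {a : ι} (ha : a ∈ A) : blockOf P a ∈ P ∧ a ∈ blockOf P a := by
  apply blockOf_mem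
  obtain ⟨D, ⟨hD, haD⟩, -⟩ := hP.2 a ha
  exact ⟨D, hD, haD⟩

lemma IsPartOn.eq_blockOf {A : Finset ι} {P : Finset (Finset ι)} (hP : IsPartOn A P)
    {a : ι} (ha : a ∈ A) {D : Finset ι} (hD : D ∈ P) (haD : a ∈ D) : D = blockOf P a :=
  hP.unique_block ha hD haD (hP.blockOf_spec ha).1 (hP.blockOf_spec ha).2

lemma IsPartOn.biUnion_eq {A : Finset ι} {P : Finset (Finset ι)} (hP : IsPartOn A P) :
    P.biUnion id = A := by
  ext a
  simp only [Finset.mem_biUnion, id_eq]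
  constructor
  · rintro ⟨D, hD, haD⟩; exact (hP.1 D hD).2 haD
  · intro ha
    obtain ⟨D, ⟨hD, haD⟩, -⟩ := hP.2 a ha
    exact ⟨D, hD, haD⟩

lemma IsPartOn.prod_blocks {A : Finset ι} {P : Finset (Finset ι)} (hP : IsPartOn A P)
    (g : ι → ℝ) : ∏ D ∈ P, ∏ i ∈ D, g i = ∏ i ∈ A, g i := by
  have hdisj : (↑P : Set (Finset ι)).PairwiseDisjoint id := by
    intro D hD E hE hne
    rw [Function.onFun, Finset.disjoint_left]
    intro a haD haE
    exact hne (hP.unique_block ((hP.1 D (Finset.mem_coe.mp hD)).2 haD)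
      (Finset.mem_coe.mp hD) haD (Finset.mem_coe.mp hE) haE)
  rw [← hP.biUnion_eq, Finset.prod_biUnion hdisj]
  rfl

lemma isPartOn_insert_block {A : Finset ι} {t : ι} (ht : t ∉ A) {R : Finset (Finset ι)}
    {D : Finset ι} (hR : R ∈ parts A) (hD : D ∈ R) :
    IsPartOn (insert t A) (insert (insert t D) (R.erase D)) := by
  have hRm := mem_parts.mp hR
  constructor
  · intro E hE
    rw [Finset.mem_insert] at hE
    rcases hE with rfl | hE
    · refine ⟨⟨t, Finset.mem_insert_self _ _⟩, ?_⟩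
      intro x hx
      rw [Finset.mem_insert] at hx ⊢
      rcases hx with rfl | hx
      · exact Or.inl rfl
      · exact Or.inr ((hRm.1 D hD).2 hx)
    · have hE' := Finset.mem_of_mem_erase hE
      exact ⟨(hRm.1 E hE').1, (hRm.1 E hE').2.trans (Finset.subset_insert t A)⟩
  · intro a ha
    rw [Finset.mem_insert] at ha
    rcases ha with rfl | ha
    · refine ⟨insert a D, ⟨Finset.mem_insert_self _ _, Finset.mem_insert_self _ _⟩, ?_⟩
      rintro E ⟨hE, haE⟩
      rw [Finset.mem_insert] at hE
      rcases hE with rfl | hE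
      · rfl
      · exact absurd ((hRm.1 E (Finset.mem_of_mem_erase hE)).2 haE) ht
    · by_cases haD : a ∈ D
      · refine ⟨insert t D, ⟨Finset.mem_insert_self _ _, Finset.mem_insert_of_mem haD⟩, ?_⟩
        rintro E ⟨hE, haE⟩
        rw [Finset.mem_insert] at hE
        rcases hE with rfl | hE
        · rfl
        · rw [Finset.mem_erase] at hE
          exact absurd (hRm.unique_block ha hE.2 haE hD haD) hE.1
      · obtain ⟨E, ⟨hE, haE⟩, hu⟩ := hRm.2 a ha
        have hED : E ≠ D := fun h => haD (h ▸ haE)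
        refine ⟨E, ⟨Finset.mem_insert_of_mem (Finset.mem_erase.mpr ⟨hED, hE⟩), haE⟩, ?_⟩
        rintro E' ⟨hE', haE'⟩
        rw [Finset.mem_insert] at hE'
        rcases hE' with rfl | hE'
        · rw [Finset.mem_insert] at haE'
          rcases haE' with rfl | haE'
          · exact absurd ha ht
          · exact absurd (hu D ⟨hD, haE'⟩).symm hED
        · exact hu E' ⟨Finset.mem_of_mem_erase hE', haE'⟩

/-- decomposition of partitions of `insert t A` -/
lemma sum_parts_insert {A : Finset ι} {t : ι} (ht : t ∉ A) (F : Finset (Finset ι) → ℝ) :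
    ∑ P ∈ parts (insert t A), F P =
      (∑ R ∈ parts A, F (insert {t} R)) +
      ∑ R ∈ parts A, ∑ D ∈ R, F (insert (insert t D) (R.erase D)) := by
  classical
  have hsing : ∀ R ∈ parts A, ({t} : Finset ι) ∉ R := by
    intro R hR hmem
    exact ht (((mem_parts.mp hR).1 _ hmem).2 (Finset.mem_singleton_self t))
  have hblkA : ∀ R ∈ parts A, ∀ D ∈ R, t ∉ D := by
    intro R hR D hD hmem
    exact ht (((mem_parts.mp hR).1 D hD).2 hmem)
  rw [← Finset.sum_filter_add_sum_filter_not (parts (insert t A)) (fun P => {t} ∈ P)]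
  congr 1
  · -- singleton part
    refine Finset.sum_nbij' (i := fun P => P.erase {t}) (j := fun R => insert {t} R)
      ?_ ?_ ?_ ?_ ?_
    · intro P hP
      rw [Finset.mem_filter] at hP
      obtain ⟨hP, hts⟩ := hP
      rw [mem_parts] at hP ⊢
      constructor
      · intro D hD
        rw [Finset.mem_erase] at hD
        obtain ⟨hne, hDP⟩ := hD
        refine ⟨(hP.1 D hDP).1, fun x hx => ?_⟩
        have hxi : x ∈ insert t A := (hP.1 D hDP).2 hx
        rw [Finset.mem_insert] at hxi
        rcases hxi with rfl | h
        · exact absurd (hP.unique_block (Finset.mem_insert_self x A) hDP hx hts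
            (Finset.mem_singleton_self x)) hne
        · exact h
      · intro a ha
        obtain ⟨D, ⟨hD, haD⟩, hu⟩ := hP.2 a (Finset.mem_insert_of_mem ha)
        have hDne : D ≠ {t} := by
          rintro rfl
          rw [Finset.mem_singleton] at haD
          exact ht (haD ▸ ha)
        refine ⟨D, ⟨Finset.mem_erase.mpr ⟨hDne, hD⟩, haD⟩, ?_⟩
        rintro E ⟨hE, haE⟩
        exact hu E ⟨(Finset.mem_erase.mp hE).2, haE⟩
    · intro R hR
      rw [Finset.mem_filter]
      have hRm := mem_parts.mp hR
      refine ⟨mem_parts.mpr ⟨?_, ?_⟩, Finset.mem_insert_self _ _⟩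
      · intro D hD
        rw [Finset.mem_insert] at hD
        rcases hD with rfl | hD
        · exact ⟨⟨t, Finset.mem_singleton_self t⟩, Finset.singleton_subset_iff.mpr
            (Finset.mem_insert_self t A)⟩
        · exact ⟨(hRm.1 D hD).1, (hRm.1 D hD).2.trans (Finset.subset_insert t A)⟩
      · intro a ha
        rw [Finset.mem_insert] at ha
        rcases ha with rfl | ha
        · refine ⟨{a}, ⟨Finset.mem_insert_self _ _, Finset.mem_singleton_self a⟩, ?_⟩
          rintro E ⟨hE, haE⟩
          rw [Finset.mem_insert] at hE
          rcases hE with rfl | hE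
          · rfl
          · exact absurd ((hRm.1 E hE).2 haE) ht
        · obtain ⟨D, ⟨hD, haD⟩, hu⟩ := hRm.2 a ha
          refine ⟨D, ⟨Finset.mem_insert_of_mem hD, haD⟩, ?_⟩
          rintro E ⟨hE, haE⟩
          rw [Finset.mem_insert] at hE
          rcases hE with rfl | hE
          · rw [Finset.mem_singleton] at haE
            exact absurd (haE ▸ ha) ht
          · exact hu E ⟨hE, haE⟩
    · intro P hP
      rw [Finset.mem_filter] at hP
      exact Finset.insert_erase hP.2
    · intro R hR
      exact Finset.erase_insert (hsing R hR)
    · intro P hP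
      rw [Finset.mem_filter] at hP
      rw [Finset.insert_erase hP.2]
  · -- non-singleton part
    rw [← Finset.sum_sigma (parts A) (fun R => R)
      (fun p => F (insert (insert t p.2) (p.1.erase p.2)))]
    refine (Finset.sum_nbij' (i := fun p : Σ _ : Finset (Finset ι), Finset ι =>
        insert (insert t p.2) (p.1.erase p.2))
      (j := fun P => ⟨insert ((blockOf P t).erase t) (P.erase (blockOf P t)),
        (blockOf P t).erase t⟩) ?_ ?_ ?_ ?_ ?_).symm
    · -- i maps into filter
      rintro ⟨R, D⟩ hp
      rw [Finset.mem_sigma] at hp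
      obtain ⟨hR, hD⟩ := hp
      have hRm := mem_parts.mp hR
      have htD : t ∉ D := hblkA R hR D hD
      rw [Finset.mem_filter]
      refine ⟨mem_parts.mpr (isPartOn_insert_block ht hR hD), ?_⟩
      intro hmem
      rw [Finset.mem_insert] at hmem
      rcases hmem with heq | hmem
      · obtain ⟨d, hd⟩ := (hRm.1 D hD).1
        have : d ∈ ({t} : Finset ι) := heq ▸ Finset.mem_insert_of_mem hd
        rw [Finset.mem_singleton] at this
        exact htD (this ▸ hd)
      · exact hsing R hR (Finset.mem_of_mem_erase hmem)
    · -- j maps into sigma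
      intro P hP
      rw [Finset.mem_filter] at hP
      obtain ⟨hP', hts⟩ := hP
      have hPm := mem_parts.mp hP'
      have htmem := hPm.blockOf_spec (Finset.mem_insert_self t A)
      set Dt := blockOf P t with hDt
      have hDtne : Dt ≠ {t} := fun h => hts (h ▸ htmem.1)
      have hDterase : (Dt.erase t).Nonempty := by
        rcases Finset.eq_empty_or_nonempty (Dt.erase t) with h | h
        · exfalso
          apply hDtne
          ext x
          rw [Finset.mem_singleton]
          constructor
          · intro hx
            by_contra hne
            exact absurd (Finset.mem_erase.mpr ⟨hne, hx⟩) (h ▸ Finset.notMem_empty x)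
          · rintro rfl; exact htmem.2
        · exact h
      rw [Finset.mem_sigma]
      constructor
      · rw [mem_parts]
        constructor
        · intro E hE
          rw [Finset.mem_insert] at hE
          rcases hE with rfl | hE
          · refine ⟨hDterase, fun x hx => ?_⟩
            rw [Finset.mem_erase] at hx
            have := (hPm.1 Dt htmem.1).2 hx.2
            rw [Finset.mem_insert] at this
            rcases this with rfl | h
            · exact absurd rfl hx.1
            · exact h
          · rw [Finset.mem_erase] at hE
            refine ⟨(hPm.1 E hE.2).1, fun x hx => ?_⟩
            have := (hPm.1 E hE.2).2 hx
            rw [Finset.mem_insert] at this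
            rcases this with rfl | h
            · exact absurd (hPm.unique_block (Finset.mem_insert_self x A) hE.2 hx
                htmem.1 htmem.2) hE.1
            · exact h
        · intro a ha
          have hat : a ≠ t := fun h => ht (h ▸ ha)
          by_cases haDt : a ∈ Dt
          · refine ⟨Dt.erase t, ⟨Finset.mem_insert_self _ _,
              Finset.mem_erase.mpr ⟨hat, haDt⟩⟩, ?_⟩
            rintro E ⟨hE, haE⟩
            rw [Finset.mem_insert] at hE
            rcases hE with rfl | hE
            · rfl
            · rw [Finset.mem_erase] at hE
              exact absurd (hPm.unique_block (Finset.mem_insert_of_mem ha) hE.2 haE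
                htmem.1 haDt) hE.1
          · obtain ⟨E, ⟨hE, haE⟩, hu⟩ := hPm.2 a (Finset.mem_insert_of_mem ha)
            have hEDt : E ≠ Dt := fun h => haDt (h ▸ haE)
            refine ⟨E, ⟨Finset.mem_insert_of_mem (Finset.mem_erase.mpr ⟨hEDt, hE⟩), haE⟩, ?_⟩
            rintro E' ⟨hE', haE'⟩
            rw [Finset.mem_insert] at hE'
            rcases hE' with rfl | hE'
            · exact absurd (Finset.mem_of_mem_erase haE') haDt
            · exact hu E' ⟨Finset.mem_of_mem_erase hE', haE'⟩
      · exact Finset.mem_insert_self _ _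
    · -- left inverse
      rintro ⟨R, D⟩ hp
      rw [Finset.mem_sigma] at hp
      obtain ⟨hR, hD⟩ := hp
      have hRm := mem_parts.mp hR
      have htD : t ∉ D := hblkA R hR D hD
      have hPm := isPartOn_insert_block ht hR hD
      have hblk : blockOf (insert (insert t D) (R.erase D)) t = insert t D :=
        (hPm.eq_blockOf (Finset.mem_insert_self t A) (Finset.mem_insert_self _ _)
          (Finset.mem_insert_self t D)).symm
      have hnotin : insert t D ∉ R.erase D := by
        intro h
        exact hblkA R hR _ (Finset.mem_of_mem_erase h) (Finset.mem_insert_self t D)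
      dsimp only
      rw [hblk, Finset.erase_insert htD, Finset.erase_insert hnotin, Finset.insert_erase hD]
    · -- right inverse
      intro P hP
      rw [Finset.mem_filter] at hP
      obtain ⟨hP', hts⟩ := hP
      have hPm := mem_parts.mp hP'
      have htmem := hPm.blockOf_spec (Finset.mem_insert_self t A)
      set Dt := blockOf P t with hDt
      have hDtne : Dt ≠ {t} := fun h => hts (h ▸ htmem.1)
      have hDterase : (Dt.erase t).Nonempty := by
        rcases Finset.eq_empty_or_nonempty (Dt.erase t) with h | h
        · exfalso
          apply hDtne
          ext x
          rw [Finset.mem_singleton]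
          constructor
          · intro hx
            by_contra hne
            exact absurd (Finset.mem_erase.mpr ⟨hne, hx⟩) (h ▸ Finset.notMem_empty x)
          · rintro rfl; exact htmem.2
        · exact h
      have h1 : insert t (Dt.erase t) = Dt := Finset.insert_erase htmem.2
      have hnotin : Dt.erase t ∉ P.erase Dt := by
        intro h
        obtain ⟨x, hx⟩ := hDterase
        have hxDt : x ∈ Dt := Finset.mem_of_mem_erase hx
        have hxA : x ∈ insert t A := (hPm.1 Dt htmem.1).2 hxDt
        exact (Finset.mem_erase.mp h).1
          (hPm.unique_block hxA (Finset.mem_of_mem_erase h) hx htmem.1 hxDt)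
      show insert (insert t (Dt.erase t)) ((insert (Dt.erase t) (P.erase Dt)).erase (Dt.erase t)) = P
      rw [h1, Finset.erase_insert hnotin, Finset.insert_erase htmem.1]
    · -- values
      rintro ⟨R, D⟩ hp
      rfl

end PartsTools
section CumTools

variable {ι : Type*} [Fintype ι] [DecidableEq ι] {n : ℕ}

lemma pE_add (f g : Equiv.Perm (Fin n) → ℝ) :
    pE n (fun σ => f σ + g σ) = pE n f + pE n g := by
  rw [pE, pE, pE, Finset.sum_add_distrib, mul_add]

lemma pE_zero : pE n (fun _ => (0 : ℝ)) = 0 := by simp [pE]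

lemma pE_const_mul (c : ℝ) (f : Equiv.Perm (Fin n) → ℝ) :
    pE n (fun σ => c * f σ) = c * pE n f := by
  rw [pE, pE, ← Finset.mul_sum]; ring

lemma pE_const (c : ℝ) : pE n (fun _ => c) = c := by
  rw [pE, Finset.sum_const, Finset.card_univ, Fintype.card_perm, Fintype.card_fin,
    nsmul_eq_mul]
  rw [inv_mul_cancel_left₀]
  exact_mod_cast Nat.factorial_ne_zero n

lemma pE_abs_le {f : Equiv.Perm (Fin n) → ℝ} {c : ℝ} (hc : ∀ σ, |f σ| ≤ c) :
    |pE n f| ≤ c := by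
  have h0 : (0:ℝ) ≤ c := le_trans (abs_nonneg _) (hc 1)
  rw [pE, abs_mul, abs_inv, Nat.abs_cast]
  calc ((n.factorial : ℝ))⁻¹ * |∑ σ : Equiv.Perm (Fin n), f σ|
      ≤ ((n.factorial : ℝ))⁻¹ * ∑ σ : Equiv.Perm (Fin n), |f σ| := by
        apply mul_le_mul_of_nonneg_left (Finset.abs_sum_le_sum_abs _ _)
        positivity
    _ ≤ ((n.factorial : ℝ))⁻¹ * ∑ _σ : Equiv.Perm (Fin n), c := by
        apply mul_le_mul_of_nonneg_left (Finset.sum_le_sum fun σ _ => hc σ)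
        positivity
    _ = c := by
        rw [Finset.sum_const, Finset.card_univ, Fintype.card_perm, Fintype.card_fin,
          nsmul_eq_mul, inv_mul_cancel_left₀]
        exact_mod_cast Nat.factorial_ne_zero n

lemma pE_perm (τ : Equiv.Perm (Fin n)) (F : Equiv.Perm (Fin n) → ℝ) :
    pE n (fun σ => F (σ * τ)) = pE n F := by
  rw [pE, pE]
  congr 1
  exact Fintype.sum_equiv (Equiv.mulRight τ) _ _ (fun σ => rfl)

lemma cum_congr {A : Finset ι} {ξ ξ' : ι → Equiv.Perm (Fin n) → ℝ}
    (h : ∀ D : Finset ι, D.Nonempty → D ⊆ A →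
      pE n (fun σ => ∏ i ∈ D, ξ i σ) = pE n (fun σ => ∏ i ∈ D, ξ' i σ)) :
    cum n A ξ = cum n A ξ' := by
  rw [cum, cum]
  refine Finset.sum_congr rfl fun P hP => ?_
  have hPm := mem_parts.mp hP
  congr 1
  exact Finset.prod_congr rfl fun D hD => h D (hPm.1 D hD).1 (hPm.1 D hD).2

lemma moment_update {D : Finset ι} {s : ι} (hsD : s ∈ D)
    (ξ : ι → Equiv.Perm (Fin n) → ℝ) (g : Equiv.Perm (Fin n) → ℝ) (σ : Equiv.Perm (Fin n)) :
    ∏ i ∈ D, Function.update ξ s g i σ = g σ * ∏ i ∈ D.erase s, ξ i σ := by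
  rw [← Finset.mul_prod_erase D _ hsD, Function.update_self]
  congr 1
  exact Finset.prod_congr rfl fun i hi => by
    rw [Function.update_of_ne (Finset.mem_erase.mp hi).1]

lemma moment_update_not {D : Finset ι} {s : ι} (hsD : s ∉ D)
    (ξ : ι → Equiv.Perm (Fin n) → ℝ) (g : Equiv.Perm (Fin n) → ℝ) (σ : Equiv.Perm (Fin n)) :
    ∏ i ∈ D, Function.update ξ s g i σ = ∏ i ∈ D, ξ i σ := by
  refine Finset.prod_congr rfl fun i hi => ?_
  have hne : i ≠ s := by rintro rfl; exact hsD hi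
  rw [Function.update_of_ne hne]

lemma cum_update_add {A : Finset ι} {s : ι} (hs : s ∈ A)
    (ξ : ι → Equiv.Perm (Fin n) → ℝ) (g h : Equiv.Perm (Fin n) → ℝ) :
    cum n A (Function.update ξ s (fun σ => g σ + h σ)) =
      cum n A (Function.update ξ s g) + cum n A (Function.update ξ s h) := by
  rw [cum, cum, cum, ← Finset.sum_add_distrib]
  refine Finset.sum_congr rfl fun P hP => ?_
  have hPm := mem_parts.mp hP
  obtain ⟨hDs, hsDs⟩ := hPm.blockOf_spec hs
  set Ds := blockOf P s
  have hrest : ∀ u : Equiv.Perm (Fin n) → ℝ, ∀ D ∈ P.erase Ds,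
      pE n (fun σ => ∏ i ∈ D, Function.update ξ s u i σ) =
      pE n (fun σ => ∏ i ∈ D, ξ i σ) := by
    intro u D hD
    have hsD : s ∉ D := by
      intro hsD'
      exact (Finset.mem_erase.mp hD).1
        (hPm.eq_blockOf hs (Finset.mem_of_mem_erase hD) hsD')
    congr 1
    funext σ
    exact moment_update_not hsD ξ u σ
  have key : ∀ u : Equiv.Perm (Fin n) → ℝ,
      ∏ D ∈ P, pE n (fun σ => ∏ i ∈ D, Function.update ξ s u i σ) =
      pE n (fun σ => u σ * ∏ i ∈ Ds.erase s, ξ i σ) *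
        ∏ D ∈ P.erase Ds, pE n (fun σ => ∏ i ∈ D, ξ i σ) := by
    intro u
    rw [← Finset.mul_prod_erase P _ hDs]
    congr 1
    · congr 1
      funext σ
      exact moment_update hsDs ξ u σ
    · exact Finset.prod_congr rfl (hrest u)
  rw [key, key, key]
  have : pE n (fun σ => (g σ + h σ) * ∏ i ∈ Ds.erase s, ξ i σ) =
      pE n (fun σ => g σ * ∏ i ∈ Ds.erase s, ξ i σ) +
      pE n (fun σ => h σ * ∏ i ∈ Ds.erase s, ξ i σ) := by
    rw [← pE_add]
    congr 1
    funext σ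
    ring
  rw [this]
  ring

lemma cum_update_zero {A : Finset ι} {s : ι} (hs : s ∈ A)
    (ξ : ι → Equiv.Perm (Fin n) → ℝ) :
    cum n A (Function.update ξ s (fun _ => (0:ℝ))) = 0 := by
  rw [cum]
  refine Finset.sum_eq_zero fun P hP => ?_
  have hPm := mem_parts.mp hP
  obtain ⟨hDs, hsDs⟩ := hPm.blockOf_spec hs
  have : pE n (fun σ => ∏ i ∈ blockOf P s, Function.update ξ s (fun _ => (0:ℝ)) i σ) = 0 := by
    have : (fun σ => ∏ i ∈ blockOf P s, Function.update ξ s (fun _ => (0:ℝ)) i σ) =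
        fun _ => (0:ℝ) := by
      funext σ
      rw [moment_update hsDs, zero_mul]
    rw [this, pE_zero]
  rw [Finset.prod_eq_zero hDs this, mul_zero]

lemma cum_update_sum {A : Finset ι} {s : ι} (hs : s ∈ A)
    (ξ : ι → Equiv.Perm (Fin n) → ℝ) {κ : Type*} [DecidableEq κ] (ts : Finset κ)
    (g : κ → Equiv.Perm (Fin n) → ℝ) :
    cum n A (Function.update ξ s (fun σ => ∑ y ∈ ts, g y σ)) =
      ∑ y ∈ ts, cum n A (Function.update ξ s (g y)) := by
  induction ts using Finset.induction_on with
  | empty => simpa using cum_update_zero hs ξ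
  | @insert a ts' hx ih =>
    rw [Finset.sum_insert hx]
    have : (fun σ => ∑ y ∈ insert a ts', g y σ) =
        fun σ => g a σ + ∑ y ∈ ts', g y σ := by
      funext σ; rw [Finset.sum_insert hx]
    rw [this, cum_update_add hs, ih]

/-- vanishing on constants -/
lemma cum_update_const {A : Finset ι} {s : ι} (hs : s ∈ A) (hcard : 2 ≤ A.card)
    (ξ : ι → Equiv.Perm (Fin n) → ℝ) (c : ℝ) :
    cum n A (Function.update ξ s (fun _ => c)) = 0 := by
  classical
  have hsA' : s ∉ A.erase s := Finset.notMem_erase s A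
  have hA : A = insert s (A.erase s) := (Finset.insert_erase hs).symm
  have hA'ne : (A.erase s).Nonempty := by
    rw [← Finset.card_pos, Finset.card_erase_of_mem hs]
    omega
  rw [cum]
  conv_lhs => rw [hA]
  rw [sum_parts_insert hsA' (fun P => muW P * ∏ D ∈ P,
    pE n (fun σ => ∏ i ∈ D, Function.update ξ s (fun _ => c) i σ))]
  rw [← Finset.sum_add_distrib]
  refine Finset.sum_eq_zero fun R hR => ?_
  have hRm := mem_parts.mp hR
  have hRne : R.Nonempty := hRm.nonempty_of hA'ne
  have hsing : ({s} : Finset ι) ∉ R := fun h =>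
    hsA' ((hRm.1 _ h).2 (Finset.mem_singleton_self s))
  have hnotinR : ∀ D ∈ R, s ∉ D := fun D hD h => hsA' ((hRm.1 D hD).2 h)
  have hmomR : ∀ D ∈ R, pE n (fun σ => ∏ i ∈ D, Function.update ξ s (fun _ => c) i σ) =
      pE n (fun σ => ∏ i ∈ D, ξ i σ) := by
    intro D hD
    congr 1
    funext σ
    exact moment_update_not (hnotinR D hD) ξ _ σ
  have hr1 : 1 ≤ R.card := Finset.card_pos.mpr hRne
  -- first term
  have hT1 : muW (insert {s} R) * ∏ D ∈ insert {s} R,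
      pE n (fun σ => ∏ i ∈ D, Function.update ξ s (fun _ => c) i σ) =
      ((-1:ℝ)^R.card * R.card.factorial) * c * ∏ D ∈ R, pE n (fun σ => ∏ i ∈ D, ξ i σ) := by
    rw [Finset.prod_insert hsing]
    have h1 : pE n (fun σ => ∏ i ∈ ({s} : Finset ι),
        Function.update ξ s (fun _ => c) i σ) = c := by
      have : (fun σ => ∏ i ∈ ({s} : Finset ι), Function.update ξ s (fun _ => c) i σ) =
          fun _ => c := by
        funext σ
        rw [Finset.prod_singleton, Function.update_self]
      rw [this, pE_const]
    rw [h1, muW, Finset.card_insert_of_notMem hsing]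
    rw [Finset.prod_congr rfl hmomR]
    simp only [Nat.add_sub_cancel]
    ring
  -- second terms
  have hT2 : ∀ D ∈ R, muW (insert (insert s D) (R.erase D)) *
      ∏ E ∈ insert (insert s D) (R.erase D),
        pE n (fun σ => ∏ i ∈ E, Function.update ξ s (fun _ => c) i σ) =
      ((-1:ℝ)^(R.card-1) * (R.card-1).factorial) * c *
        ∏ D ∈ R, pE n (fun σ => ∏ i ∈ D, ξ i σ) := by
    intro D hD
    have hins : insert s D ∉ R.erase D := fun h =>
      hnotinR _ (Finset.mem_of_mem_erase h) (Finset.mem_insert_self s D)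
    have hsD : s ∉ D := hnotinR D hD
    rw [Finset.prod_insert hins]
    have h1 : pE n (fun σ => ∏ i ∈ insert s D,
        Function.update ξ s (fun _ => c) i σ) =
        c * pE n (fun σ => ∏ i ∈ D, ξ i σ) := by
      rw [← pE_const_mul]
      congr 1
      funext σ
      rw [moment_update (Finset.mem_insert_self s D), Finset.erase_insert hsD]
    have h2 : ∀ E ∈ R.erase D, pE n (fun σ => ∏ i ∈ E,
        Function.update ξ s (fun _ => c) i σ) = pE n (fun σ => ∏ i ∈ E, ξ i σ) :=
      fun E hE => hmomR E (Finset.mem_of_mem_erase hE)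
    rw [h1, Finset.prod_congr rfl h2, muW, Finset.card_insert_of_notMem hins,
      Finset.card_erase_of_mem hD]
    rw [← Finset.mul_prod_erase R (fun D => pE n (fun σ => ∏ i ∈ D, ξ i σ)) hD]
    have heq : R.card - 1 + 1 - 1 = R.card - 1 := by omega
    rw [heq]
    ring
  rw [hT1, Finset.sum_congr rfl hT2, Finset.sum_const, nsmul_eq_mul]
  have harith : ∀ r : ℕ, 1 ≤ r →
      ((-1:ℝ))^r * r.factorial + r * (((-1:ℝ))^(r-1) * (r-1).factorial) = 0 := by
    intro r hr
    obtain ⟨r', rfl⟩ : ∃ r', r = r' + 1 := ⟨r - 1, by omega⟩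
    rw [Nat.add_sub_cancel, Nat.factorial_succ, pow_succ]
    push_cast
    ring
  linear_combination (c * ∏ D ∈ R, pE n (fun σ => ∏ i ∈ D, ξ i σ)) * harith R.card hr1

end CumTools
section Crude

variable {ι : Type*} [Fintype ι] [DecidableEq ι] {n : ℕ}

/-- crude constant -/
def Kc (ι : Type*) [Fintype ι] : ℝ :=
  (Fintype.card (Finset (Finset ι))) * ((2 ^ Fintype.card ι).factorial)

lemma Kc_nonneg : 0 ≤ Kc ι := by
  rw [Kc]; positivity

lemma muW_abs (P : Finset (Finset ι)) : |muW P| = ((P.card - 1).factorial : ℝ) := by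
  rw [muW, abs_mul, abs_pow, abs_neg, abs_one, one_pow, one_mul, Nat.abs_cast]

lemma cum_abs_le {A : Finset ι} {ξ : ι → Equiv.Perm (Fin n) → ℝ} {b : ι → ℝ}
    (hb0 : ∀ i ∈ A, 0 ≤ b i) (hb : ∀ i ∈ A, ∀ σ, |ξ i σ| ≤ b i) :
    |cum n A ξ| ≤ Kc ι * ∏ i ∈ A, b i := by
  have hprodnn : (0:ℝ) ≤ ∏ i ∈ A, b i := Finset.prod_nonneg hb0
  rw [cum]
  refine le_trans (Finset.abs_sum_le_sum_abs _ _) ?_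
  have per : ∀ P ∈ parts A,
      |muW P * ∏ D ∈ P, pE n (fun σ => ∏ i ∈ D, ξ i σ)| ≤
      (((2 ^ Fintype.card ι).factorial : ℕ) : ℝ) * ∏ i ∈ A, b i := by
    intro P hP
    have hPm := mem_parts.mp hP
    rw [abs_mul]
    have h1 : |muW P| ≤ (((2 ^ Fintype.card ι).factorial : ℕ) : ℝ) := by
      rw [muW_abs]
      have : P.card - 1 ≤ 2 ^ Fintype.card ι := by
        have h := Finset.card_le_univ P
        rw [Fintype.card_finset] at h
        omega
      exact_mod_cast Nat.factorial_le this
    have h2 : |∏ D ∈ P, pE n (fun σ => ∏ i ∈ D, ξ i σ)| ≤ ∏ i ∈ A, b i := by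
      rw [Finset.abs_prod]
      have hle : ∀ D ∈ P, |pE n (fun σ => ∏ i ∈ D, ξ i σ)| ≤ ∏ i ∈ D, b i := by
        intro D hD
        apply pE_abs_le
        intro σ
        rw [Finset.abs_prod]
        exact Finset.prod_le_prod (fun i _ => abs_nonneg _)
          (fun i hi => hb i ((hPm.1 D hD).2 hi) σ)
      calc ∏ D ∈ P, |pE n (fun σ => ∏ i ∈ D, ξ i σ)|
          ≤ ∏ D ∈ P, ∏ i ∈ D, b i :=
            Finset.prod_le_prod (fun D _ => abs_nonneg _) hle
        _ = ∏ i ∈ A, b i := hPm.prod_blocks b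
    exact mul_le_mul h1 h2 (abs_nonneg _) (by positivity)
  refine le_trans (Finset.sum_le_sum per) ?_
  rw [Finset.sum_const, nsmul_eq_mul, Kc, ← mul_assoc]
  apply mul_le_mul_of_nonneg_right _ hprodnn
  apply mul_le_mul_of_nonneg_right _ (by positivity)
  exact_mod_cast Finset.card_le_univ _

end Crude

section Malyshev

variable {ι : Type*} [Fintype ι] [DecidableEq ι] {n : ℕ}

lemma isPartOn_union {A₁ A₂ : Finset ι} {P₁ P₂ : Finset (Finset ι)}
    (h₁ : IsPartOn A₁ P₁) (h₂ : IsPartOn A₂ P₂) (hdisj : Disjoint A₁ A₂) :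
    IsPartOn (A₁ ∪ A₂) (P₁ ∪ P₂) := by
  constructor
  · intro D hD
    rw [Finset.mem_union] at hD
    rcases hD with hD | hD
    · exact ⟨(h₁.1 D hD).1, (h₁.1 D hD).2.trans Finset.subset_union_left⟩
    · exact ⟨(h₂.1 D hD).1, (h₂.1 D hD).2.trans Finset.subset_union_right⟩
  · intro a ha
    rw [Finset.mem_union] at ha
    rcases ha with ha | ha
    · obtain ⟨D, ⟨hD, haD⟩, hu⟩ := h₁.2 a ha
      refine ⟨D, ⟨Finset.mem_union_left _ hD, haD⟩, ?_⟩
      rintro E ⟨hE, haE⟩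
      rw [Finset.mem_union] at hE
      rcases hE with hE | hE
      · exact hu E ⟨hE, haE⟩
      · exact absurd ((h₂.1 E hE).2 haE) (Finset.disjoint_left.mp hdisj ha)
    · obtain ⟨D, ⟨hD, haD⟩, hu⟩ := h₂.2 a ha
      refine ⟨D, ⟨Finset.mem_union_right _ hD, haD⟩, ?_⟩
      rintro E ⟨hE, haE⟩
      rw [Finset.mem_union] at hE
      rcases hE with hE | hE
      · exact absurd ((h₁.1 E hE).2 haE) (Finset.disjoint_right.mp hdisj ha)
      · exact hu E ⟨hE, haE⟩

lemma isPartOn_sub {A : Finset ι} {P T : Finset (Finset ι)} (hP : IsPartOn A P)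
    (hT : T ⊆ P) : IsPartOn (T.biUnion id) T := by
  constructor
  · intro D hD
    refine ⟨(hP.1 D (hT hD)).1, fun x hx => ?_⟩
    rw [Finset.mem_biUnion]
    exact ⟨D, hD, hx⟩
  · intro a ha
    rw [Finset.mem_biUnion] at ha
    obtain ⟨D, hD, haD⟩ := ha
    refine ⟨D, ⟨hD, haD⟩, ?_⟩
    rintro E ⟨hE, haE⟩
    exact hP.unique_block ((hP.1 D (hT hD)).2 haD) (hT hE) haE (hT hD) haD

/-- the key factorial sum identity -/
lemma sum_split_muW {Q : Finset (Finset ι)} {a b : Finset ι} (ha : a ∈ Q) (hb : b ∈ Q)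
    (hab : a ≠ b) :
    ∑ T ∈ Q.powerset.filter (fun T => a ∈ T ∧ b ∉ T), muW T * muW (Q \ T) = - muW Q := by
  classical
  obtain ⟨q, hq⟩ : ∃ q, Q.card = q + 2 := by
    have h2 : 2 ≤ Q.card := Finset.one_lt_card.mpr ⟨a, ha, b, hb, hab⟩
    exact ⟨Q.card - 2, by omega⟩
  set Q'' := (Q.erase a).erase b with hQ''
  have hQ''card : Q''.card = q := by
    rw [hQ'', Finset.card_erase_of_mem (Finset.mem_erase.mpr ⟨(Ne.symm hab), hb⟩),
      Finset.card_erase_of_mem ha, hq]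
    omega
  have haQ'' : a ∉ Q'' := fun h => (Finset.notMem_erase a Q) (Finset.mem_of_mem_erase h)
  -- reindex by T' := T.erase a
  have hre : ∑ T ∈ Q.powerset.filter (fun T => a ∈ T ∧ b ∉ T), muW T * muW (Q \ T) =
      ∑ T' ∈ Q''.powerset, muW (insert a T') * muW (Q \ insert a T') := by
    refine Finset.sum_nbij' (i := fun T => T.erase a) (j := fun T' => insert a T')
      ?_ ?_ ?_ ?_ ?_
    · intro T hT
      rw [Finset.mem_filter, Finset.mem_powerset] at hT
      rw [Finset.mem_powerset, hQ'']
      intro x hx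
      rw [Finset.mem_erase] at hx ⊢
      refine ⟨fun h => hT.2.2 (h ▸ hx.2), Finset.mem_erase.mpr ⟨hx.1, hT.1 hx.2⟩⟩
    · intro T' hT'
      rw [Finset.mem_powerset] at hT'
      rw [Finset.mem_filter, Finset.mem_powerset]
      refine ⟨?_, Finset.mem_insert_self a T', fun h => ?_⟩
      · intro x hx
        rw [Finset.mem_insert] at hx
        rcases hx with rfl | hx
        · exact ha
        · exact Finset.mem_of_mem_erase (Finset.mem_of_mem_erase (hT' hx))
      · rw [Finset.mem_insert] at h
        rcases h with h | h
        · exact hab h.symm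
        · exact (Finset.mem_erase.mp (hT' h)).1 rfl
    · intro T hT
      rw [Finset.mem_filter] at hT
      exact Finset.insert_erase hT.2.1
    · intro T' hT'
      rw [Finset.mem_powerset] at hT'
      exact Finset.erase_insert (fun h => haQ'' (hT' h))
    · intro T hT
      rw [Finset.mem_filter] at hT
      rw [Finset.insert_erase hT.2.1]
  rw [hre]
  -- now group by cardinality
  rw [Finset.sum_powerset]
  have hterm : ∀ j ∈ Finset.range (Q''.card + 1), ∀ T' ∈ Finset.powersetCard j Q'',
      muW (insert a T') * muW (Q \ insert a T') =
      ((-1:ℝ))^q * (j.factorial * (q - j).factorial) := by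
    intro j hj T' hT'
    rw [Finset.mem_powersetCard] at hT'
    rw [Finset.mem_range, hQ''card] at hj
    have haT' : a ∉ T' := fun h => haQ'' (hT'.1 h)
    have hsub : insert a T' ⊆ Q := by
      intro x hx
      rw [Finset.mem_insert] at hx
      rcases hx with rfl | hx
      · exact ha
      · exact Finset.mem_of_mem_erase (Finset.mem_of_mem_erase (hT'.1 hx))
    have hc1 : (insert a T').card = j + 1 := by
      rw [Finset.card_insert_of_notMem haT', hT'.2]
    have hc2 : (Q \ insert a T').card = q + 1 - j := by
      rw [Finset.card_sdiff_of_subset hsub, hc1, hq]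
      omega
    rw [muW, muW, hc1, hc2]
    have e1 : j + 1 - 1 = j := by omega
    have e2 : q + 1 - j - 1 = q - j := by omega
    rw [e1, e2]
    have hsign : ((-1:ℝ))^j * ((-1:ℝ))^(q-j) = ((-1:ℝ))^q := by
      rw [← pow_add]
      congr 1
      omega
    linear_combination ((j.factorial : ℝ) * ((q - j).factorial : ℝ)) * hsign
  have hmain : ∑ j ∈ Finset.range (Q''.card + 1), ∑ T' ∈ Finset.powersetCard j Q'',
      muW (insert a T') * muW (Q \ insert a T') =
      ∑ j ∈ Finset.range (q + 1), (q.choose j : ℝ) *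
        (((-1:ℝ))^q * (j.factorial * (q - j).factorial)) := by
    rw [hQ''card]
    refine Finset.sum_congr rfl fun j hj => ?_
    rw [Finset.sum_congr rfl (hterm j (by rwa [hQ''card])), Finset.sum_const,
      Finset.card_powersetCard, hQ''card, nsmul_eq_mul]
  rw [hmain]
  have hfac : ∀ j ∈ Finset.range (q + 1),
      (q.choose j : ℝ) * (((-1:ℝ))^q * (j.factorial * (q - j).factorial)) =
      ((-1:ℝ))^q * q.factorial := by
    intro j hj
    rw [Finset.mem_range] at hj
    have := Nat.choose_mul_factorial_mul_factorial (by omega : j ≤ q)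
    have hcast : (q.choose j : ℝ) * j.factorial * (q - j).factorial = q.factorial := by
      exact_mod_cast this
    linear_combination ((-1:ℝ))^q * hcast
  rw [Finset.sum_congr rfl hfac, Finset.sum_const, Finset.card_range, nsmul_eq_mul]
  rw [muW, hq]
  have e3 : q + 2 - 1 = q + 1 := by omega
  rw [e3, Nat.factorial_succ, pow_succ]
  push_cast
  ring

end Malyshev
section Merge

variable {ι : Type*} [Fintype ι] [DecidableEq ι] {n : ℕ}

/-- Part 1: merging a block pair-member: cumulant with merged slot as a sum over
partitions of `A` in which `s` and `t` lie in the same block. -/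
lemma cum_merged_eq_sum {A : Finset ι} {s t : ι} (hs : s ∈ A) (ht : t ∈ A) (hst : s ≠ t)
    (ξ : ι → Equiv.Perm (Fin n) → ℝ) :
    cum n (A.erase t) (Function.update ξ s (fun σ => ξ s σ * ξ t σ)) =
      ∑ P ∈ (parts A).filter (fun P => t ∈ blockOf P s),
        muW P * ∏ D ∈ P, pE n (fun σ => ∏ i ∈ D, ξ i σ) := by
  classical
  have hsA' : s ∈ A.erase t := Finset.mem_erase.mpr ⟨hst, hs⟩
  have htA' : t ∉ A.erase t := Finset.notMem_erase t A
  have hAins : insert t (A.erase t) = A := Finset.insert_erase ht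
  rw [cum]
  refine Finset.sum_nbij'
    (i := fun P' => insert (insert t (blockOf P' s)) (P'.erase (blockOf P' s)))
    (j := fun P => insert ((blockOf P s).erase t) (P.erase (blockOf P s))) ?_ ?_ ?_ ?_ ?_
  · -- i into filter
    intro P' hP'
    have hPm' := mem_parts.mp hP'
    obtain ⟨hDs'mem, hsDs'⟩ := hPm'.blockOf_spec hsA'
    have hpart := isPartOn_insert_block htA' hP' hDs'mem
    rw [hAins] at hpart
    rw [Finset.mem_filter]
    refine ⟨mem_parts.mpr hpart, ?_⟩
    have hblk : blockOf (insert (insert t (blockOf P' s)) (P'.erase (blockOf P' s))) s =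
        insert t (blockOf P' s) :=
      (hpart.eq_blockOf hs (Finset.mem_insert_self _ _)
        (Finset.mem_insert_of_mem hsDs')).symm
    rw [hblk]
    exact Finset.mem_insert_self t _
  · -- j into parts (A.erase t)
    intro P hP
    rw [Finset.mem_filter] at hP
    obtain ⟨hP, htDs⟩ := hP
    have hPm := mem_parts.mp hP
    obtain ⟨hDsmem, hsDs⟩ := hPm.blockOf_spec hs
    rw [mem_parts]
    constructor
    · intro E hE
      rw [Finset.mem_insert] at hE
      rcases hE with rfl | hE
      · refine ⟨⟨s, Finset.mem_erase.mpr ⟨hst, hsDs⟩⟩, fun x hx => ?_⟩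
        rw [Finset.mem_erase] at hx
        exact Finset.mem_erase.mpr ⟨hx.1, (hPm.1 _ hDsmem).2 hx.2⟩
      · rw [Finset.mem_erase] at hE
        refine ⟨(hPm.1 E hE.2).1, fun x hx => ?_⟩
        refine Finset.mem_erase.mpr ⟨fun hxe => ?_, (hPm.1 E hE.2).2 hx⟩
        subst hxe
        exact hE.1 (hPm.unique_block ((hPm.1 E hE.2).2 hx) hE.2 hx hDsmem htDs)
    · intro a ha
      rw [Finset.mem_erase] at ha
      obtain ⟨hat, haA⟩ := ha
      by_cases haDs : a ∈ blockOf P s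
      · refine ⟨(blockOf P s).erase t, ⟨Finset.mem_insert_self _ _,
          Finset.mem_erase.mpr ⟨hat, haDs⟩⟩, ?_⟩
        rintro E ⟨hE, haE⟩
        rw [Finset.mem_insert] at hE
        rcases hE with rfl | hE
        · rfl
        · rw [Finset.mem_erase] at hE
          exact absurd (hPm.unique_block haA hE.2 haE hDsmem haDs) hE.1
      · obtain ⟨E, ⟨hE, haE⟩, hu⟩ := hPm.2 a haA
        have hEDs : E ≠ blockOf P s := fun h => haDs (h ▸ haE)
        refine ⟨E, ⟨Finset.mem_insert_of_mem (Finset.mem_erase.mpr ⟨hEDs, hE⟩), haE⟩, ?_⟩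
        rintro E' ⟨hE', haE'⟩
        rw [Finset.mem_insert] at hE'
        rcases hE' with rfl | hE'
        · exact absurd (Finset.mem_of_mem_erase haE') haDs
        · exact hu E' ⟨Finset.mem_of_mem_erase hE', haE'⟩
  · -- left inverse
    intro P' hP'
    have hPm' := mem_parts.mp hP'
    obtain ⟨hDs'mem, hsDs'⟩ := hPm'.blockOf_spec hsA'
    have htDs' : t ∉ blockOf P' s := fun h => htA' ((hPm'.1 _ hDs'mem).2 h)
    have hpart := isPartOn_insert_block htA' hP' hDs'mem
    rw [hAins] at hpart
    have hblk : blockOf (insert (insert t (blockOf P' s)) (P'.erase (blockOf P' s))) s =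
        insert t (blockOf P' s) :=
      (hpart.eq_blockOf hs (Finset.mem_insert_self _ _)
        (Finset.mem_insert_of_mem hsDs')).symm
    have hnotin : insert t (blockOf P' s) ∉ P'.erase (blockOf P' s) := fun h =>
      htA' ((hPm'.1 _ (Finset.mem_of_mem_erase h)).2 (Finset.mem_insert_self t _))
    rw [hblk, Finset.erase_insert htDs', Finset.erase_insert hnotin,
      Finset.insert_erase hDs'mem]
  · -- right inverse
    intro P hP
    rw [Finset.mem_filter] at hP
    obtain ⟨hP, htDs⟩ := hP
    have hPm := mem_parts.mp hP
    obtain ⟨hDsmem, hsDs⟩ := hPm.blockOf_spec hs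
    have hEne : (blockOf P s).erase t ∉ P.erase (blockOf P s) := by
      intro h
      rw [Finset.mem_erase] at h
      have hsE : s ∈ (blockOf P s).erase t := Finset.mem_erase.mpr ⟨hst, hsDs⟩
      exact h.1 (hPm.unique_block hs h.2 hsE hDsmem hsDs)
    -- blockOf of the j-image at s is (blockOf P s).erase t
    have hjpart : IsPartOn (A.erase t) (insert ((blockOf P s).erase t)
        (P.erase (blockOf P s))) := by
      constructor
      · intro E hE
        rw [Finset.mem_insert] at hE
        rcases hE with rfl | hE
        · refine ⟨⟨s, Finset.mem_erase.mpr ⟨hst, hsDs⟩⟩, fun x hx => ?_⟩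
          rw [Finset.mem_erase] at hx
          exact Finset.mem_erase.mpr ⟨hx.1, (hPm.1 _ hDsmem).2 hx.2⟩
        · rw [Finset.mem_erase] at hE
          refine ⟨(hPm.1 E hE.2).1, fun x hx => ?_⟩
          refine Finset.mem_erase.mpr ⟨fun hxe => ?_, (hPm.1 E hE.2).2 hx⟩
          subst hxe
          exact hE.1 (hPm.unique_block ((hPm.1 E hE.2).2 hx) hE.2 hx hDsmem htDs)
      · intro a ha
        rw [Finset.mem_erase] at ha
        obtain ⟨hat, haA⟩ := ha
        by_cases haDs : a ∈ blockOf P s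
        · refine ⟨(blockOf P s).erase t, ⟨Finset.mem_insert_self _ _,
            Finset.mem_erase.mpr ⟨hat, haDs⟩⟩, ?_⟩
          rintro E ⟨hE, haE⟩
          rw [Finset.mem_insert] at hE
          rcases hE with rfl | hE
          · rfl
          · rw [Finset.mem_erase] at hE
            exact absurd (hPm.unique_block haA hE.2 haE hDsmem haDs) hE.1
        · obtain ⟨E, ⟨hE, haE⟩, hu⟩ := hPm.2 a haA
          have hEDs : E ≠ blockOf P s := fun h => haDs (h ▸ haE)
          refine ⟨E, ⟨Finset.mem_insert_of_mem (Finset.mem_erase.mpr ⟨hEDs, hE⟩), haE⟩, ?_⟩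
          rintro E' ⟨hE', haE'⟩
          rw [Finset.mem_insert] at hE'
          rcases hE' with rfl | hE'
          · exact absurd (Finset.mem_of_mem_erase haE') haDs
          · exact hu E' ⟨Finset.mem_of_mem_erase hE', haE'⟩
    have hblk2 : blockOf (insert ((blockOf P s).erase t) (P.erase (blockOf P s))) s =
        (blockOf P s).erase t :=
      (hjpart.eq_blockOf (Finset.mem_erase.mpr ⟨hst, hs⟩) (Finset.mem_insert_self _ _)
        (Finset.mem_erase.mpr ⟨hst, hsDs⟩)).symm
    rw [hblk2, Finset.insert_erase htDs, Finset.erase_insert hEne,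
      Finset.insert_erase hDsmem]
  · -- values
    intro P' hP'
    have hPm' := mem_parts.mp hP'
    obtain ⟨hDs'mem, hsDs'⟩ := hPm'.blockOf_spec hsA'
    have htDs' : t ∉ blockOf P' s := fun h => htA' ((hPm'.1 _ hDs'mem).2 h)
    have hnotin : insert t (blockOf P' s) ∉ P'.erase (blockOf P' s) := fun h =>
      htA' ((hPm'.1 _ (Finset.mem_of_mem_erase h)).2 (Finset.mem_insert_self t _))
    have hcard : (insert (insert t (blockOf P' s)) (P'.erase (blockOf P' s))).card =
        P'.card := by
      rw [Finset.card_insert_of_notMem hnotin, Finset.card_erase_of_mem hDs'mem]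
      have : 1 ≤ P'.card := Finset.card_pos.mpr ⟨_, hDs'mem⟩
      omega
    rw [muW, muW, hcard]
    congr 1
    -- products of moments
    rw [Finset.prod_insert hnotin, ← Finset.mul_prod_erase P' _ hDs'mem]
    congr 1
    · -- merged block moment
      congr 1
      funext σ
      rw [moment_update hsDs', Finset.prod_insert htDs',
        ← Finset.mul_prod_erase (blockOf P' s) _ hsDs']
      ring
    · -- other blocks
      refine Finset.prod_congr rfl fun D hD => ?_
      have hsD : s ∉ D := by
        intro h
        exact (Finset.mem_erase.mp hD).1
          (hPm'.eq_blockOf hsA' (Finset.mem_of_mem_erase hD) h)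
      congr 1
      funext σ
      exact moment_update_not hsD ξ _ σ

end Merge
section Merge2

variable {ι : Type*} [Fintype ι] [DecidableEq ι] {n : ℕ}

lemma sum_split_eq {A : Finset ι} {s t : ι} (hs : s ∈ A) (ht : t ∈ A) (hst : s ≠ t)
    (ξ : ι → Equiv.Perm (Fin n) → ℝ) :
    ∑ I ∈ ((A.erase s).erase t).powerset,
      cum n (insert s I) ξ * cum n (insert t (((A.erase s).erase t) \ I)) ξ =
    ∑ P ∈ (parts A).filter (fun P => t ∉ blockOf P s),
      (- muW P) * ∏ D ∈ P, pE n (fun σ => ∏ i ∈ D, ξ i σ) := by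
  classical
  set U := (A.erase s).erase t with hU
  have hsU : s ∉ U := fun h => (Finset.notMem_erase s A) (Finset.mem_of_mem_erase h)
  have htU : t ∉ U := Finset.notMem_erase t _
  have hUA : insert s (insert t U) = A := by
    rw [hU, Finset.insert_erase (Finset.mem_erase.mpr ⟨hst.symm, ht⟩), Finset.insert_erase hs]
  have hmemU : ∀ x ∈ U, x ∈ A ∧ x ≠ s ∧ x ≠ t := by
    intro x hx
    rw [hU, Finset.mem_erase, Finset.mem_erase] at hx
    exact ⟨hx.2.2, hx.2.1, hx.1⟩
  set m : Finset ι → ℝ := fun D => pE n (fun σ => ∏ i ∈ D, ξ i σ) with hm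
  set X : Finset (Σ _ : Finset ι, Σ _ : Finset (Finset ι), Finset (Finset ι)) :=
    U.powerset.sigma (fun I => (parts (insert s I)).sigma
      (fun _ => parts (insert t (U \ I)))) with hX
  set F : (Σ _ : Finset ι, Σ _ : Finset (Finset ι), Finset (Finset ι)) → ℝ :=
    fun x => (muW x.2.1 * ∏ D ∈ x.2.1, m D) * (muW x.2.2 * ∏ D ∈ x.2.2, m D) with hF
  set Y : Finset (Σ _ : Finset (Finset ι), Finset (Finset ι)) :=
    ((parts A).filter (fun P => t ∉ blockOf P s)).sigma
      (fun P => P.powerset.filter (fun T => blockOf P s ∈ T ∧ blockOf P t ∉ T)) with hY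
  set G : (Σ _ : Finset (Finset ι), Finset (Finset ι)) → ℝ :=
    fun y => (muW y.2 * ∏ D ∈ y.2, m D) * (muW (y.1 \ y.2) * ∏ D ∈ y.1 \ y.2, m D) with hG
  have step1 : ∑ I ∈ U.powerset,
      cum n (insert s I) ξ * cum n (insert t (U \ I)) ξ = ∑ x ∈ X, F x := by
    rw [hX, Finset.sum_sigma]
    refine Finset.sum_congr rfl fun I _ => ?_
    rw [Finset.sum_sigma]
    rw [cum, cum, Finset.sum_mul_sum]
  have hdisjground : ∀ I ∈ U.powerset, Disjoint (insert s I) (insert t (U \ I)) := by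
    intro I hI
    rw [Finset.mem_powerset] at hI
    rw [Finset.disjoint_left]
    intro x hx hx'
    rw [Finset.mem_insert] at hx hx'
    rcases hx with rfl | hx
    · rcases hx' with h | h
      · exact hst h
      · exact hsU (Finset.mem_sdiff.mp h).1
    · rcases hx' with rfl | h
      · exact htU (hI hx)
      · exact (Finset.mem_sdiff.mp h).2 hx
  have hunionground : ∀ I ∈ U.powerset, insert s I ∪ insert t (U \ I) = A := by
    intro I hI
    rw [Finset.mem_powerset] at hI
    rw [← hUA]
    ext x
    simp only [Finset.mem_union, Finset.mem_insert, Finset.mem_sdiff]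
    constructor
    · rintro (⟨rfl | hx⟩ | ⟨rfl | hx⟩)
      · exact Or.inl rfl
      · exact Or.inr (Or.inr (hI hx))
      · exact Or.inr (Or.inl rfl)
      · exact Or.inr (Or.inr hx.1)
    · rintro (rfl | rfl | hx)
      · exact Or.inl (Or.inl rfl)
      · exact Or.inr (Or.inl rfl)
      · by_cases hxI : x ∈ I
        · exact Or.inl (Or.inr hxI)
        · exact Or.inr (Or.inr ⟨hx, hxI⟩)
  have step2 : ∑ x ∈ X, F x = ∑ y ∈ Y, G y := by
    refine Finset.sum_nbij' (i := fun x => (⟨x.2.1 ∪ x.2.2, x.2.1⟩ :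
        Σ _ : Finset (Finset ι), Finset (Finset ι)))
      (j := fun y => (⟨(y.2.biUnion id).erase s, y.2, y.1 \ y.2⟩ :
        Σ _ : Finset ι, Σ _ : Finset (Finset ι), Finset (Finset ι))) ?_ ?_ ?_ ?_ ?_
    · -- i into Y
      rintro ⟨I, P₁, P₂⟩ hx
      rw [hX, Finset.mem_sigma, Finset.mem_sigma] at hx
      obtain ⟨hI, hP₁, hP₂⟩ := hx
      have h1 := mem_parts.mp hP₁
      have h2 := mem_parts.mp hP₂
      have hpart : IsPartOn A (P₁ ∪ P₂) := by
        have := isPartOn_union h1 h2 (hdisjground I hI)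
        rwa [hunionground I hI] at this
      have hIU := Finset.mem_powerset.mp hI
      -- s-block
      obtain ⟨hB₁mem, hsB₁⟩ := h1.blockOf_spec (Finset.mem_insert_self s I)
      have hblks : blockOf (P₁ ∪ P₂) s = blockOf P₁ s :=
        (hpart.eq_blockOf hs (Finset.mem_union_left _ hB₁mem) hsB₁).symm
      obtain ⟨hB₂mem, htB₂⟩ := h2.blockOf_spec (Finset.mem_insert_self t _)
      have hblkt : blockOf (P₁ ∪ P₂) t = blockOf P₂ t :=
        (hpart.eq_blockOf ht (Finset.mem_union_right _ hB₂mem) htB₂).symm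
      have htnotB₁ : t ∉ blockOf P₁ s := by
        intro hmem
        have := (h1.1 _ hB₁mem).2 hmem
        rw [Finset.mem_insert] at this
        rcases this with h | h
        · exact hst h.symm
        · exact htU (hIU h)
      have hdisjP : Disjoint P₁ P₂ := by
        rw [Finset.disjoint_left]
        intro D hD1 hD2
        obtain ⟨x, hx⟩ := (h1.1 D hD1).1
        exact Finset.disjoint_left.mp (hdisjground I hI) ((h1.1 D hD1).2 hx)
          ((h2.1 D hD2).2 hx)
      rw [hY, Finset.mem_sigma]
      constructor
      · rw [Finset.mem_filter]
        exact ⟨mem_parts.mpr hpart, by rw [hblks]; exact htnotB₁⟩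
      · rw [Finset.mem_filter, Finset.mem_powerset]
        refine ⟨Finset.subset_union_left, by rw [hblks]; exact hB₁mem, ?_⟩
        rw [hblkt]
        exact fun h => Finset.disjoint_left.mp hdisjP h hB₂mem
    · -- j into X
      rintro ⟨P, T⟩ hy
      rw [hY, Finset.mem_sigma, Finset.mem_filter, Finset.mem_filter,
        Finset.mem_powerset] at hy
      obtain ⟨⟨hP, htDs⟩, hTP, hDsT, hDtT⟩ := hy
      have hPm := mem_parts.mp hP
      obtain ⟨hDsmem, hsDs⟩ := hPm.blockOf_spec hs
      obtain ⟨hDtmem, htDt⟩ := hPm.blockOf_spec ht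
      have hsbi : s ∈ T.biUnion id := Finset.mem_biUnion.mpr ⟨_, hDsT, hsDs⟩
      have htbi : t ∉ T.biUnion id := by
        intro h
        rw [Finset.mem_biUnion] at h
        obtain ⟨D, hD, htD⟩ := h
        exact hDtT ((hPm.eq_blockOf ht (hTP hD) htD) ▸ hD)
      have hins : insert s ((T.biUnion id).erase s) = T.biUnion id :=
        Finset.insert_erase hsbi
      have hIsub : (T.biUnion id).erase s ⊆ U := by
        intro x hx
        rw [Finset.mem_erase] at hx
        obtain ⟨hxs, hxbi⟩ := hx
        rw [Finset.mem_biUnion] at hxbi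
        obtain ⟨D, hD, hxD⟩ := hxbi
        have hxA : x ∈ A := (hPm.1 D (hTP hD)).2 hxD
        have hxt : x ≠ t := by
          rintro rfl
          exact hDtT ((hPm.eq_blockOf ht (hTP hD) hxD) ▸ hD)
        rw [hU, Finset.mem_erase, Finset.mem_erase]
        exact ⟨hxt, hxs, hxA⟩
      have hground : (P \ T).biUnion id = insert t (U \ (T.biUnion id).erase s) := by
        ext x
        rw [Finset.mem_biUnion, Finset.mem_insert, Finset.mem_sdiff]
        constructor
        · rintro ⟨D, hD, hxD⟩
          rw [Finset.mem_sdiff] at hD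
          have hxA : x ∈ A := (hPm.1 D hD.1).2 hxD
          by_cases hxt : x = t
          · exact Or.inl hxt
          · have hxs : x ≠ s := by
              rintro rfl
              exact hD.2 ((hPm.eq_blockOf hs hD.1 hxD) ▸ hDsT)
            have hxbi : x ∉ T.biUnion id := by
              intro h
              rw [Finset.mem_biUnion] at h
              obtain ⟨E, hE, hxE⟩ := h
              exact hD.2 ((hPm.unique_block hxA hD.1 hxD (hTP hE) hxE) ▸ hE)
            refine Or.inr ⟨?_, fun h => hxbi (Finset.mem_of_mem_erase h)⟩
            rw [hU, Finset.mem_erase, Finset.mem_erase]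
            exact ⟨hxt, hxs, hxA⟩
        · rintro (hxeq | ⟨hxU, hxnI⟩)
          · rw [hxeq]
            exact ⟨blockOf P t, Finset.mem_sdiff.mpr ⟨hDtmem, hDtT⟩, htDt⟩
          · obtain ⟨hxA, hxs, hxt⟩ := hmemU x hxU
            obtain ⟨D, ⟨hD, hxD⟩, -⟩ := hPm.2 x hxA
            refine ⟨D, Finset.mem_sdiff.mpr ⟨hD, fun hDT => ?_⟩, hxD⟩
            exact hxnI (Finset.mem_erase.mpr ⟨hxs, Finset.mem_biUnion.mpr ⟨D, hDT, hxD⟩⟩)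
      rw [hX, Finset.mem_sigma, Finset.mem_sigma]
      dsimp only
      refine ⟨Finset.mem_powerset.mpr hIsub, ?_, ?_⟩
      · rw [mem_parts, hins]
        exact isPartOn_sub hPm hTP
      · rw [mem_parts, ← hground]
        exact isPartOn_sub hPm Finset.sdiff_subset
    · -- left inverse
      rintro ⟨I, P₁, P₂⟩ hx
      rw [hX, Finset.mem_sigma, Finset.mem_sigma] at hx
      obtain ⟨hI, hP₁, hP₂⟩ := hx
      have h1 := mem_parts.mp hP₁
      have h2 := mem_parts.mp hP₂
      have hIU := Finset.mem_powerset.mp hI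
      have hsI : s ∉ I := fun h => hsU (hIU h)
      have hdisjP : Disjoint P₁ P₂ := by
        rw [Finset.disjoint_left]
        intro D hD1 hD2
        obtain ⟨x, hx⟩ := (h1.1 D hD1).1
        exact Finset.disjoint_left.mp (hdisjground I hI) ((h1.1 D hD1).2 hx)
          ((h2.1 D hD2).2 hx)
      dsimp only
      rw [Finset.union_sdiff_cancel_left hdisjP, h1.biUnion_eq, Finset.erase_insert hsI]
    · -- right inverse
      rintro ⟨P, T⟩ hy
      rw [hY, Finset.mem_sigma, Finset.mem_filter, Finset.mem_filter,
        Finset.mem_powerset] at hy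
      obtain ⟨⟨hP, htDs⟩, hTP, hDsT, hDtT⟩ := hy
      dsimp only
      rw [Finset.union_sdiff_of_subset hTP]
    · -- values
      rintro ⟨I, P₁, P₂⟩ hx
      rw [hX, Finset.mem_sigma, Finset.mem_sigma] at hx
      obtain ⟨hI, hP₁, hP₂⟩ := hx
      have h1 := mem_parts.mp hP₁
      have h2 := mem_parts.mp hP₂
      have hdisjP : Disjoint P₁ P₂ := by
        rw [Finset.disjoint_left]
        intro D hD1 hD2
        obtain ⟨x, hx⟩ := (h1.1 D hD1).1
        exact Finset.disjoint_left.mp (hdisjground I hI) ((h1.1 D hD1).2 hx)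
          ((h2.1 D hD2).2 hx)
      rw [hF, hG]
      dsimp only
      rw [Finset.union_sdiff_cancel_left hdisjP]
  have step3 : ∑ y ∈ Y, G y = ∑ P ∈ (parts A).filter (fun P => t ∉ blockOf P s),
      (- muW P) * ∏ D ∈ P, m D := by
    rw [hY, Finset.sum_sigma]
    refine Finset.sum_congr rfl fun P hP => ?_
    rw [Finset.mem_filter] at hP
    obtain ⟨hP, htDs⟩ := hP
    have hPm := mem_parts.mp hP
    obtain ⟨hDsmem, hsDs⟩ := hPm.blockOf_spec hs
    obtain ⟨hDtmem, htDt⟩ := hPm.blockOf_spec ht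
    have hne : blockOf P s ≠ blockOf P t := fun h => htDs (h ▸ htDt)
    have hval : ∀ T ∈ P.powerset.filter (fun T => blockOf P s ∈ T ∧ blockOf P t ∉ T),
        G ⟨P, T⟩ = (muW T * muW (P \ T)) * ∏ D ∈ P, m D := by
      intro T hT
      rw [Finset.mem_filter, Finset.mem_powerset] at hT
      rw [hG]
      dsimp only
      rw [← Finset.prod_sdiff hT.1]
      ring
    rw [Finset.sum_congr rfl hval, ← Finset.sum_mul, sum_split_muW hDsmem hDtmem hne,
      neg_mul]
  rw [step1, step2, step3]

/-- Malyshev / Leonov–Shiryaev two-factor product formula -/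
lemma cum_merge {A : Finset ι} {s t : ι} (hs : s ∈ A) (ht : t ∈ A) (hst : s ≠ t)
    (ξ : ι → Equiv.Perm (Fin n) → ℝ) :
    cum n A ξ =
      cum n (A.erase t) (Function.update ξ s (fun σ => ξ s σ * ξ t σ)) -
      ∑ I ∈ ((A.erase s).erase t).powerset,
        cum n (insert s I) ξ * cum n (insert t (((A.erase s).erase t) \ I)) ξ := by
  rw [cum_merged_eq_sum hs ht hst, sum_split_eq hs ht hst, cum,
    ← Finset.sum_filter_add_sum_filter_not (parts A) (fun P => t ∈ blockOf P s)]
  simp only [neg_mul]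
  rw [Finset.sum_neg_distrib]
  ring

end Merge2
section Decay

variable {ι : Type*} [Fintype ι] [DecidableEq ι]

lemma cum_update_neg {n : ℕ} {A : Finset ι} {s : ι} (hs : s ∈ A)
    (ξ : ι → Equiv.Perm (Fin n) → ℝ) (g : Equiv.Perm (Fin n) → ℝ) :
    cum n A (Function.update ξ s (fun σ => -(g σ))) =
      - cum n A (Function.update ξ s g) := by
  have h := cum_update_add hs ξ g (fun σ => -(g σ))
  have h0 : (fun σ => g σ + -(g σ)) = (fun _ : Equiv.Perm (Fin n) => (0:ℝ)) := by
    funext σ; ring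
  rw [h0, cum_update_zero hs] at h
  linarith

lemma update_family {n : ℕ} (f : ι → Fin n → ℝ) (v : ι → Fin n) (s : ι) (y : Fin n) :
    (fun (i : ι) (σ : Equiv.Perm (Fin n)) => f i (σ (Function.update v s y i))) =
      Function.update (fun i σ => f i (σ (v i))) s (fun σ => f s (σ y)) := by
  funext i
  by_cases hi : i = s
  · subst hi
    rw [Function.update_self, Function.update_self]
  · rw [Function.update_of_ne hi, Function.update_of_ne hi]

set_option maxHeartbeats 1600000 in
/-- the central decay estimate -/
lemma decay (N : ℕ) : ∃ M : ℝ, 0 ≤ M ∧ ∀ (n : ℕ) (A : Finset ι)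
    (f : ι → Fin n → ℝ) (v : ι → Fin n) (b : ι → ℝ),
    A.Nonempty →
    (∀ i ∈ A, 0 ≤ b i) → (∀ i ∈ A, ∀ q, |f i q| ≤ b i) →
    A.card + (A.image v).card ≤ N →
    |cum n A (fun i σ => f i (σ (v i)))| * (n : ℝ) ^ ((A.image v).card) ≤
      M * (∏ i ∈ A, b i) * (n : ℝ) := by
  induction N with
  | zero =>
    refine ⟨1, zero_le_one, fun n A f v b hAne _ _ hN => absurd hN ?_⟩
    have := Finset.card_pos.mpr hAne
    omega
  | succ N ih =>
    obtain ⟨M', hM'0, hM'⟩ := ih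
    set Mc : ℝ := Kc ι * (2*(N+1):ℝ)^(N+1) with hMc
    have hMc0 : 0 ≤ Mc := by
      rw [hMc]
      apply mul_nonneg Kc_nonneg
      positivity
    refine ⟨Mc + 2*(N+1)*M' + (M' + 2^(N+1) * M'^2), by positivity, ?_⟩
    intro n A f v b hAne hb0 hb hN
    obtain ⟨s0, hs0⟩ := hAne
    have hn0 : 0 < n := (v s0).pos
    have hnR : (0:ℝ) < n := by exact_mod_cast hn0
    set d := (A.image v).card with hd
    set r := A.card with hr
    have hd1 : 1 ≤ d := Finset.card_pos.mpr ⟨v s0, Finset.mem_image_of_mem v hs0⟩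
    have hr1 : 1 ≤ r := Finset.card_pos.mpr ⟨s0, hs0⟩
    have hdr : d ≤ r := Finset.card_image_le
    have hPb0 : (0:ℝ) ≤ ∏ i ∈ A, b i := Finset.prod_nonneg hb0
    have hcrude : |cum n A (fun i σ => f i (σ (v i)))| ≤ Kc ι * ∏ i ∈ A, b i := by
      apply cum_abs_le hb0
      intro i hi σ
      exact hb i hi (σ (v i))
    have hMtot0 : (0:ℝ) ≤ Mc + 2*(N+1)*M' + (M' + 2^(N+1) * M'^2) := by positivity
    have hmono : ∀ C C' : ℝ, 0 ≤ C' - C →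
        C * (∏ i ∈ A, b i) * n ≤ C' * (∏ i ∈ A, b i) * n := by
      intro C C' h
      have h2 := mul_nonneg (mul_nonneg h hPb0) (le_of_lt hnR)
      nlinarith
    -- crude case
    by_cases hsmall : n < 2*(N+1) ∨ d = 1
    · have hpow : (n:ℝ)^d ≤ (2*(N+1):ℝ)^(N+1) * n := by
        rcases hsmall with hns | hd1'
        · obtain ⟨e, he⟩ : ∃ e, d = e + 1 := ⟨d - 1, by omega⟩
          rw [he, pow_succ]
          apply mul_le_mul_of_nonneg_right _ (le_of_lt hnR)
          have hc1 : (n:ℝ) ≤ (2*(N+1):ℝ) := by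
            push_cast
            exact_mod_cast le_of_lt (by exact_mod_cast hns : (n:ℕ) < 2*(N+1))
          have hc2 : (1:ℝ) ≤ (2*(N+1):ℝ) := by
            have : (0:ℝ) ≤ (N:ℝ) := Nat.cast_nonneg N
            linarith
          calc (n:ℝ)^e ≤ (2*(N+1):ℝ)^e := pow_le_pow_left₀ (le_of_lt hnR) hc1 e
            _ ≤ (2*(N+1):ℝ)^(N+1) := pow_le_pow_right₀ hc2 (by omega)
        · rw [hd1', pow_one]
          have hc2 : (1:ℝ) ≤ (2*(N+1):ℝ) := by
            have : (0:ℝ) ≤ (N:ℝ) := Nat.cast_nonneg N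
            linarith
          have h1 : (1:ℝ) ≤ (2*(N+1):ℝ)^(N+1) :=
            (one_pow (N+1)).symm.le.trans (pow_le_pow_left₀ zero_le_one hc2 _)
          have h2 := mul_le_mul_of_nonneg_right h1 (le_of_lt hnR)
          nlinarith [h2]
      calc |cum n A (fun i σ => f i (σ (v i)))| * (n:ℝ)^d
          ≤ (Kc ι * ∏ i ∈ A, b i) * ((2*(N+1):ℝ)^(N+1) * n) := by
            apply mul_le_mul hcrude hpow (by positivity)
            have := Kc_nonneg (ι := ι)
            positivity
        _ = Mc * (∏ i ∈ A, b i) * n := by rw [hMc]; ring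
        _ ≤ (Mc + 2*(N+1)*M' + (M' + 2^(N+1) * M'^2)) * (∏ i ∈ A, b i) * n := by
            apply hmono
            have : (0:ℝ) ≤ 2*(N+1)*M' + (M' + 2^(N+1) * M'^2) := by positivity
            linarith
    · push_neg at hsmall
      obtain ⟨hn2, hd2⟩ := hsmall
      have hd2' : 2 ≤ d := by omega
      have hr2 : 2 ≤ r := le_trans hd2' hdr
      by_cases hsing : ∃ s ∈ A, v s ∉ (A.erase s).image v
      · -- CASE A : some index value occurs only once
        obtain ⟨s, hsA, hvs⟩ := hsing
        set W := (A.erase s).image v with hW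
        have hAins : A = insert s (A.erase s) := (Finset.insert_erase hsA).symm
        have himg : A.image v = insert (v s) W := by
          conv_lhs => rw [hAins]
          rw [Finset.image_insert]
        have hWcard : W.card = d - 1 := by
          rw [hd, himg, Finset.card_insert_of_notMem hvs]
          omega
        set e := W.card with he
        have hde : d = e + 1 := by omega
        have heN : e ≤ N := by omega
        set ξv := fun (i : ι) (σ : Equiv.Perm (Fin n)) => f i (σ (v i)) with hξv
        -- each exchange-equivalent cumulant equals the original
        have hswap : ∀ y : Fin n, y ∉ W →
            cum n A (Function.update ξv s (fun σ => f s (σ y))) = cum n A ξv := by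
          intro y hy
          rw [← update_family]
          apply cum_congr
          intro D hDne hDA
          set τ := Equiv.swap (v s) y with hτ
          have hval : ∀ (σ : Equiv.Perm (Fin n)),
              ∏ i ∈ D, f i (σ (Function.update v s y i)) =
              (fun σ' => ∏ i ∈ D, f i (σ' (v i))) (σ * τ) := by
            intro σ
            refine Finset.prod_congr rfl fun i hi => ?_
            by_cases his : i = s
            · subst his
              rw [Function.update_self, Equiv.Perm.mul_apply, hτ, Equiv.swap_apply_left]
            · have hiW : v i ∈ W := by
                rw [hW]
                exact Finset.mem_image_of_mem v (Finset.mem_erase.mpr ⟨his, hDA hi⟩)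
              have hne1 : v i ≠ v s := by
                intro h
                rw [h] at hiW
                exact hvs hiW
              have hne2 : v i ≠ y := by
                intro h
                rw [h] at hiW
                exact hy hiW
              rw [Function.update_of_ne his, Equiv.Perm.mul_apply, hτ,
                Equiv.swap_apply_of_ne_of_ne hne1 hne2]
          calc pE n (fun σ => ∏ i ∈ D, f i (σ (Function.update v s y i)))
              = pE n (fun σ => (fun σ' => ∏ i ∈ D, f i (σ' (v i))) (σ * τ)) := by
                congr 1
                funext σ
                exact hval σ
            _ = pE n (fun σ => ∏ i ∈ D, f i (σ (v i))) :=
                pE_perm τ (fun σ' => ∏ i ∈ D, f i (σ' (v i)))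
        -- the linear identity
        have hsumW : ∀ σ : Equiv.Perm (Fin n),
            ∑ y ∈ Finset.univ \ W, f s (σ y) =
            (∑ q : Fin n, f s q) + ∑ g ∈ W, -(f s (σ g)) := by
          intro σ
          rw [Finset.sum_sdiff_eq_sub (Finset.subset_univ W)]
          have : ∑ y : Fin n, f s (σ y) = ∑ q : Fin n, f s q :=
            Equiv.sum_comp σ (f s)
          rw [this, Finset.sum_neg_distrib]
          ring
        have hlhs : ∑ y ∈ Finset.univ \ W,
            cum n A (Function.update ξv s (fun σ => f s (σ y))) =
            ((n - e : ℕ) : ℝ) * cum n A ξv := by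
          rw [Finset.sum_congr rfl (fun y hy => hswap y (Finset.mem_sdiff.mp hy).2),
            Finset.sum_const, nsmul_eq_mul]
          congr 2
          rw [Finset.card_sdiff_of_subset (Finset.subset_univ W), Finset.card_univ, Fintype.card_fin]
        have hrhs : ∑ y ∈ Finset.univ \ W,
            cum n A (Function.update ξv s (fun σ => f s (σ y))) =
            - ∑ g ∈ W, cum n A (Function.update ξv s (fun σ => f s (σ g))) := by
          rw [← cum_update_sum hsA]
          have hslot : (fun σ => ∑ y ∈ Finset.univ \ W, f s (σ y)) =
              (fun σ : Equiv.Perm (Fin n) =>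
                (fun _ => ∑ q : Fin n, f s q) σ + (fun σ => ∑ g ∈ W, -(f s (σ g))) σ) := by
            funext σ
            exact hsumW σ
          rw [hslot, cum_update_add hsA, cum_update_const hsA (by omega : 2 ≤ A.card),
            cum_update_sum hsA, zero_add]
          rw [Finset.sum_congr rfl (fun g _ => cum_update_neg hsA ξv (fun σ => f s (σ g))),
            Finset.sum_neg_distrib]
        -- bound the terms on the right via the inductive hypothesis
        have hterm : ∀ g ∈ W,
            |cum n A (Function.update ξv s (fun σ => f s (σ g)))| * (n:ℝ)^e ≤
            M' * (∏ i ∈ A, b i) * n := by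
          intro g hg
          rw [← update_family]
          have himg' : A.image (Function.update v s g) = W := by
            conv_lhs => rw [hAins]
            rw [Finset.image_insert, Function.update_self]
            have : (A.erase s).image (Function.update v s g) = W := by
              rw [hW]
              refine Finset.image_congr fun i hi => ?_
              rw [Function.update_of_ne (Finset.mem_erase.mp hi).1]
            rw [this, Finset.insert_eq_self.mpr hg]
          have := hM' n A f (Function.update v s g) b ⟨s0, hs0⟩ hb0 hb
            (by rw [himg']; omega)
          rwa [himg'] at this
        have habs : |cum n A ξv| * ((n:ℝ) - e) ≤
            (e : ℝ) * (M' * (∏ i ∈ A, b i) * n / (n:ℝ)^e) := by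
          have hne : ((n:ℝ) - e) = ((n - e : ℕ) : ℝ) := by
            push_cast [Nat.cast_sub (by omega : e ≤ n)]
            ring
          have heq : ((n - e : ℕ) : ℝ) * cum n A ξv =
              - ∑ g ∈ W, cum n A (Function.update ξv s (fun σ => f s (σ g))) := by
            rw [← hlhs, hrhs]
          have hpe : (0:ℝ) < (n:ℝ)^e := by positivity
          calc |cum n A ξv| * ((n:ℝ) - e)
              = |((n - e : ℕ) : ℝ) * cum n A ξv| := by
                rw [abs_mul, Nat.abs_cast, hne]
                ring
            _ = |∑ g ∈ W, cum n A (Function.update ξv s (fun σ => f s (σ g)))| := by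
                rw [heq, abs_neg]
            _ ≤ ∑ g ∈ W, |cum n A (Function.update ξv s (fun σ => f s (σ g)))| :=
                Finset.abs_sum_le_sum_abs _ _
            _ ≤ ∑ g ∈ W, M' * (∏ i ∈ A, b i) * n / (n:ℝ)^e := by
                refine Finset.sum_le_sum fun g hg => ?_
                rw [le_div_iff₀ hpe]
                exact hterm g hg
            _ = (e : ℝ) * (M' * (∏ i ∈ A, b i) * n / (n:ℝ)^e) := by
                rw [Finset.sum_const, nsmul_eq_mul, he]
        -- final algebra
        have hnhalf : (n:ℝ) ≤ 2 * ((n:ℝ) - e) := by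
          have : (e:ℝ) ≤ N := by exact_mod_cast heN
          have : (2*(N+1) : ℝ) ≤ n := by exact_mod_cast hn2
          linarith
        have hpe : (0:ℝ) < (n:ℝ)^e := by positivity
        have hcnn : 0 ≤ |cum n A ξv| := abs_nonneg _
        calc |cum n A ξv| * (n:ℝ)^d
            = (|cum n A ξv| * n) * (n:ℝ)^e := by rw [hde, pow_succ]; ring
          _ ≤ (|cum n A ξv| * (2 * ((n:ℝ) - e))) * (n:ℝ)^e := by
              apply mul_le_mul_of_nonneg_right _ (le_of_lt hpe)
              exact mul_le_mul_of_nonneg_left hnhalf hcnn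
          _ = 2 * (|cum n A ξv| * ((n:ℝ) - e)) * (n:ℝ)^e := by ring
          _ ≤ 2 * ((e : ℝ) * (M' * (∏ i ∈ A, b i) * n / (n:ℝ)^e)) * (n:ℝ)^e := by
              apply mul_le_mul_of_nonneg_right _ (le_of_lt hpe)
              apply mul_le_mul_of_nonneg_left habs (by norm_num)
          _ = 2 * (e:ℝ) * (M' * (∏ i ∈ A, b i) * n) := by
              field_simp
          _ ≤ 2*(N+1)*M' * (∏ i ∈ A, b i) * n := by
              have he' : (e:ℝ) ≤ (N:ℝ) + 1 := by
                have : (e:ℝ) ≤ (N:ℝ) := by exact_mod_cast heN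
                linarith
              have hbnd : (0:ℝ) ≤ M' * (∏ i ∈ A, b i) * n := by positivity
              nlinarith
          _ ≤ (Mc + 2*(N+1)*M' + (M' + 2^(N+1) * M'^2)) * (∏ i ∈ A, b i) * n := by
              apply hmono
              have : (0:ℝ) ≤ Mc + (M' + 2^(N+1) * M'^2) := by positivity
              linarith
      · -- CASE B : merge two slots with the same index
        push_neg at hsing
        obtain ⟨t, htAe, hvt⟩ := Finset.mem_image.mp (hsing s0 hs0)
        have htA : t ∈ A := Finset.mem_of_mem_erase htAe
        have hst : s0 ≠ t := fun h => (Finset.mem_erase.mp htAe).1 h.symm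
        set ξv := fun (i : ι) (σ : Equiv.Perm (Fin n)) => f i (σ (v i)) with hξv
        have hmerge := cum_merge hs0 htA hst ξv
        set U := (A.erase s0).erase t with hU
        have hsU : s0 ∉ U := fun h => (Finset.notMem_erase s0 A) (Finset.mem_of_mem_erase h)
        have htU : t ∉ U := Finset.notMem_erase t _
        have hUA : insert s0 (insert t U) = A := by
          rw [hU, Finset.insert_erase (Finset.mem_erase.mpr ⟨fun h => hst h.symm, htA⟩),
            Finset.insert_erase hs0]
        have hUcard : U.card = r - 2 := by
          rw [hU, Finset.card_erase_of_mem (Finset.mem_erase.mpr ⟨fun h => hst h.symm, htA⟩),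
            Finset.card_erase_of_mem hs0]
          omega
        have hs0At : s0 ∈ A.erase t := Finset.mem_erase.mpr ⟨hst, hs0⟩
        -- the merged term
        set f' := Function.update f s0 (fun q => f s0 q * f t q) with hf'
        have hfam : Function.update ξv s0 (fun σ => ξv s0 σ * ξv t σ) =
            fun i σ => f' i (σ (v i)) := by
          funext i
          by_cases hi : i = s0
          · subst hi
            rw [Function.update_self, hf', Function.update_self]
            funext σ
            rw [hξv]
            dsimp only
            rw [hvt]
          · rw [Function.update_of_ne hi, hf', Function.update_of_ne hi]
        set b' := Function.update b s0 (b s0 * b t) with hb'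
        have himgeq : (A.erase t).image v = A.image v := by
          apply Finset.Subset.antisymm
            (Finset.image_subset_image (Finset.erase_subset t A))
          intro x hx
          rw [Finset.mem_image] at hx ⊢
          obtain ⟨i, hiA, rfl⟩ := hx
          by_cases hit : i = t
          · subst hit
            exact ⟨s0, hs0At, hvt.symm ▸ rfl⟩
          · exact ⟨i, Finset.mem_erase.mpr ⟨hit, hiA⟩, rfl⟩
        have hprod' : ∏ i ∈ A.erase t, b' i = ∏ i ∈ A, b i := by
          have hL : ∏ i ∈ A.erase t, b' i =
              (b s0 * b t) * ∏ i ∈ (A.erase t).erase s0, b i := by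
            rw [← Finset.mul_prod_erase (A.erase t) b' hs0At, hb', Function.update_self]
            congr 1
            refine Finset.prod_congr rfl fun i hi => ?_
            rw [Function.update_of_ne (Finset.mem_erase.mp hi).1]
          have hR : ∏ i ∈ A, b i = b t * (b s0 * ∏ i ∈ (A.erase t).erase s0, b i) := by
            rw [← Finset.mul_prod_erase A b htA, ← Finset.mul_prod_erase (A.erase t) b hs0At]
          rw [hL, hR]
          ring
        have hmerged : |cum n (A.erase t) (fun i σ => f' i (σ (v i)))| * (n:ℝ)^d ≤
            (M' * ∏ i ∈ A, b i) * n := by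
          have h := hM' n (A.erase t) f' v b' ⟨s0, hs0At⟩ ?_ ?_ ?_
          · rw [himgeq, hprod'] at h
            exact h
          · intro i hi
            by_cases his : i = s0
            · subst his
              rw [hb', Function.update_self]
              exact mul_nonneg (hb0 _ hs0) (hb0 _ htA)
            · rw [hb', Function.update_of_ne his]
              exact hb0 i (Finset.mem_of_mem_erase hi)
          · intro i hi q
            by_cases his : i = s0
            · subst his
              rw [hb', Function.update_self, hf', Function.update_self]
              rw [abs_mul]
              exact mul_le_mul (hb _ hs0 q) (hb _ htA q) (abs_nonneg _)
                (hb0 _ hs0)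
            · rw [hb', Function.update_of_ne his, hf', Function.update_of_ne his]
              exact hb i (Finset.mem_of_mem_erase hi) q
          · rw [himgeq, Finset.card_erase_of_mem htA]
            omega
        -- the split terms
        have hsplit : ∀ I ∈ U.powerset,
            |cum n (insert s0 I) ξv * cum n (insert t (U \ I)) ξv| * (n:ℝ)^d ≤
            (M' * M' * ∏ i ∈ A, b i) * n := by
          intro I hI
          have hIU := Finset.mem_powerset.mp hI
          set A₁ := insert s0 I with hA₁
          set A₂ := insert t (U \ I) with hA₂
          have hdisj : Disjoint A₁ A₂ := by
            rw [Finset.disjoint_left]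
            intro x hx hx'
            rw [hA₁, Finset.mem_insert] at hx
            rw [hA₂, Finset.mem_insert] at hx'
            rcases hx with rfl | hx
            · rcases hx' with h | h
              · exact hst h
              · exact hsU (Finset.mem_sdiff.mp h).1
            · rcases hx' with rfl | h
              · exact htU (hIU hx)
              · exact (Finset.mem_sdiff.mp h).2 hx
          have hunion : A₁ ∪ A₂ = A := by
            rw [← hUA]
            ext x
            simp only [hA₁, hA₂, Finset.mem_union, Finset.mem_insert, Finset.mem_sdiff]
            constructor
            · rintro (⟨rfl | hx⟩ | ⟨rfl | hx⟩)
              · exact Or.inl rfl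
              · exact Or.inr (Or.inr (hIU hx))
              · exact Or.inr (Or.inl rfl)
              · exact Or.inr (Or.inr hx.1)
            · rintro (rfl | rfl | hx)
              · exact Or.inl (Or.inl rfl)
              · exact Or.inr (Or.inl rfl)
              · by_cases hxI : x ∈ I
                · exact Or.inl (Or.inr hxI)
                · exact Or.inr (Or.inr ⟨hx, hxI⟩)
          have hA1sub : A₁ ⊆ A := hunion ▸ Finset.subset_union_left
          have hA2sub : A₂ ⊆ A := hunion ▸ Finset.subset_union_right
          have hA1t : A₁ ⊆ A.erase t := by
            intro x hx
            refine Finset.mem_erase.mpr ⟨?_, hA1sub hx⟩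
            rintro rfl
            rw [hA₁, Finset.mem_insert] at hx
            rcases hx with h | h
            · exact hst h.symm
            · exact htU (hIU h)
          have hA2s : A₂ ⊆ A.erase s0 := by
            intro x hx
            refine Finset.mem_erase.mpr ⟨?_, hA2sub hx⟩
            rintro rfl
            rw [hA₂, Finset.mem_insert] at hx
            rcases hx with h | h
            · exact hst h
            · exact hsU (Finset.mem_sdiff.mp h).1
          set d₁ := (A₁.image v).card with hd₁
          set d₂ := (A₂.image v).card with hd₂
          have h1 := hM' n A₁ f v b ⟨s0, Finset.mem_insert_self _ _⟩
            (fun i hi => hb0 i (hA1sub hi)) (fun i hi => hb i (hA1sub hi)) ?_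
          swap
          · have hc : A₁.card ≤ r - 1 := by
              have := Finset.card_le_card hA1t
              rw [Finset.card_erase_of_mem htA] at this
              omega
            have hdd : d₁ ≤ d := Finset.card_le_card (Finset.image_subset_image hA1sub)
            omega
          have h2 := hM' n A₂ f v b ⟨t, Finset.mem_insert_self _ _⟩
            (fun i hi => hb0 i (hA2sub hi)) (fun i hi => hb i (hA2sub hi)) ?_
          swap
          · have hc : A₂.card ≤ r - 1 := by
              have := Finset.card_le_card hA2s
              rw [Finset.card_erase_of_mem hs0] at this
              omega
            have hdd : d₂ ≤ d := Finset.card_le_card (Finset.image_subset_image hA2sub)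
            omega
          -- d + 1 ≤ d₁ + d₂
          have hdsum : d + 1 ≤ d₁ + d₂ := by
            have hinter : v s0 ∈ (A₁.image v) ∩ (A₂.image v) := by
              rw [Finset.mem_inter]
              constructor
              · exact Finset.mem_image_of_mem v (Finset.mem_insert_self _ _)
              · rw [← hvt]
                exact Finset.mem_image_of_mem v (Finset.mem_insert_self _ _)
            have huni : (A₁.image v) ∪ (A₂.image v) = A.image v := by
              rw [← Finset.image_union, hunion]
            have := Finset.card_union_add_card_inter (A₁.image v) (A₂.image v)
            have hi1 : 1 ≤ ((A₁.image v) ∩ (A₂.image v)).card :=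
              Finset.card_pos.mpr ⟨_, hinter⟩
            rw [huni] at this
            omega
          have hprodsplit : (∏ i ∈ A₁, b i) * (∏ i ∈ A₂, b i) = ∏ i ∈ A, b i := by
            rw [← Finset.prod_union hdisj, hunion]
          have hpowle : (n:ℝ)^(d+1) ≤ (n:ℝ)^(d₁+d₂) := by
            apply pow_le_pow_right₀ _ hdsum
            exact_mod_cast hn0
          have hc1 : (0:ℝ) ≤ |cum n A₁ ξv| := abs_nonneg _
          have hc2 : (0:ℝ) ≤ |cum n A₂ ξv| := abs_nonneg _
          have key : |cum n A₁ ξv * cum n A₂ ξv| * (n:ℝ)^(d+1) ≤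
              ((M' * ∏ i ∈ A₁, b i) * n) * ((M' * ∏ i ∈ A₂, b i) * n) := by
            rw [abs_mul]
            calc |cum n A₁ ξv| * |cum n A₂ ξv| * (n:ℝ)^(d+1)
                ≤ |cum n A₁ ξv| * |cum n A₂ ξv| * (n:ℝ)^(d₁+d₂) := by
                  apply mul_le_mul_of_nonneg_left hpowle (mul_nonneg hc1 hc2)
              _ = (|cum n A₁ ξv| * (n:ℝ)^d₁) * (|cum n A₂ ξv| * (n:ℝ)^d₂) := by
                  rw [pow_add]
                  ring
              _ ≤ ((M' * ∏ i ∈ A₁, b i) * n) * ((M' * ∏ i ∈ A₂, b i) * n) := by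
                  apply mul_le_mul h1 h2 (by positivity) ?_
                  have : (0:ℝ) ≤ ∏ i ∈ A₁, b i :=
                    Finset.prod_nonneg (fun i hi => hb0 i (hA1sub hi))
                  positivity
          have hrhs : ((M' * ∏ i ∈ A₁, b i) * n) * ((M' * ∏ i ∈ A₂, b i) * n) =
              ((M' * M' * ∏ i ∈ A, b i) * n) * n := by
            rw [← hprodsplit]
            ring
          rw [hrhs] at key
          have key2 : |cum n A₁ ξv * cum n A₂ ξv| * (n:ℝ)^d * n ≤
              ((M' * M' * ∏ i ∈ A, b i) * n) * n := by
            calc |cum n A₁ ξv * cum n A₂ ξv| * (n:ℝ)^d * n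
                = |cum n A₁ ξv * cum n A₂ ξv| * (n:ℝ)^(d+1) := by
                  rw [pow_succ]
                  ring
              _ ≤ ((M' * M' * ∏ i ∈ A, b i) * n) * n := key
          exact le_of_mul_le_mul_right key2 hnR
        -- put everything together
        have hS : |∑ I ∈ U.powerset,
            cum n (insert s0 I) ξv * cum n (insert t (U \ I)) ξv| * (n:ℝ)^d ≤
            2^(N+1) * (M' * M' * ∏ i ∈ A, b i) * n := by
          have habs2 : |∑ I ∈ U.powerset,
              cum n (insert s0 I) ξv * cum n (insert t (U \ I)) ξv| * (n:ℝ)^d ≤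
              ∑ I ∈ U.powerset,
                |cum n (insert s0 I) ξv * cum n (insert t (U \ I)) ξv| * (n:ℝ)^d := by
            rw [← Finset.sum_mul]
            apply mul_le_mul_of_nonneg_right (Finset.abs_sum_le_sum_abs _ _) (by positivity)
          refine habs2.trans ?_
          refine (Finset.sum_le_sum hsplit).trans ?_
          rw [Finset.sum_const, nsmul_eq_mul, Finset.card_powerset]
          have hcard2 : ((2:ℝ))^U.card ≤ 2^(N+1) := by
            apply pow_le_pow_right₀ one_le_two
            rw [hUcard]
            omega
          have hpos : (0:ℝ) ≤ (M' * M' * ∏ i ∈ A, b i) * n := by positivity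
          calc ((2^U.card : ℕ) : ℝ) * ((M' * M' * ∏ i ∈ A, b i) * n)
              = ((2:ℝ))^U.card * ((M' * M' * ∏ i ∈ A, b i) * n) := by push_cast; ring
            _ ≤ ((2:ℝ))^(N+1) * ((M' * M' * ∏ i ∈ A, b i) * n) :=
                mul_le_mul_of_nonneg_right hcard2 hpos
            _ = 2^(N+1) * (M' * M' * ∏ i ∈ A, b i) * n := by ring
        calc |cum n A ξv| * (n:ℝ)^d
            ≤ (|cum n (A.erase t) (Function.update ξv s0 (fun σ => ξv s0 σ * ξv t σ))| +
              |∑ I ∈ U.powerset, cum n (insert s0 I) ξv * cum n (insert t (U \ I)) ξv|) *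
              (n:ℝ)^d := by
              apply mul_le_mul_of_nonneg_right _ (by positivity)
              rw [hmerge]
              exact (abs_sub _ _).trans (le_refl _)
          _ ≤ (M' * ∏ i ∈ A, b i) * n + 2^(N+1) * (M' * M' * ∏ i ∈ A, b i) * n := by
              rw [add_mul]
              apply add_le_add
              · rw [hfam]
                exact hmerged
              · exact hS
          _ = (M' + 2^(N+1) * M'^2) * (∏ i ∈ A, b i) * n := by ring
          _ ≤ (Mc + 2*(N+1)*M' + (M' + 2^(N+1) * M'^2)) * (∏ i ∈ A, b i) * n := by
              apply hmono
              have : (0:ℝ) ≤ Mc + 2*(N+1)*M' := by positivity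
              linarith

end Decay
section ZBound

/-- the rank function -/
def zf (n : ℕ) (q : Fin n) : ℝ :=
  Real.sqrt (12 / ((n : ℝ) ^ 2 - 1)) * (((q : ℕ) : ℝ) + 1 - ((n : ℝ) + 1) / 2)

lemma Zr_eq_zf (n : ℕ) (i : Fin n) (σ : Equiv.Perm (Fin n)) :
    Zr n i σ = zf n (σ i) := rfl

lemma zf_abs_le (n : ℕ) (q : Fin n) : |zf n q| ≤ 2 := by
  rcases le_or_gt n 1 with hn | hn
  · -- n = 1 : the sqrt factor vanishes
    have hq : (0:ℕ) < n := q.pos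
    have hn1 : n = 1 := by omega
    subst hn1
    rw [zf]
    have h0 : ((1:ℕ):ℝ)^2 - 1 = 0 := by norm_num
    rw [h0, div_zero, Real.sqrt_zero, zero_mul, abs_zero]
    norm_num
  · have hn2 : (2:ℝ) ≤ (n:ℝ) := by exact_mod_cast hn
    have hpos : (0:ℝ) < (n:ℝ)^2 - 1 := by nlinarith
    have ha : (0:ℝ) ≤ 12 / ((n:ℝ)^2 - 1) := by positivity
    have hq1 : ((q:ℕ):ℝ) ≤ (n:ℝ) - 1 := by
      have := q.isLt
      have : ((q:ℕ):ℝ) ≤ (n:ℝ) - 1 := by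
        have h := Nat.lt_iff_add_one_le.mp q.isLt
        have : ((q:ℕ):ℝ) + 1 ≤ (n:ℝ) := by exact_mod_cast h
        linarith
      exact this
    have hq0 : (0:ℝ) ≤ ((q:ℕ):ℝ) := Nat.cast_nonneg _
    have hcabs : |((q:ℕ):ℝ) + 1 - ((n:ℝ) + 1)/2| ≤ ((n:ℝ) - 1)/2 := by
      rw [abs_le]
      constructor <;> nlinarith
    have hs0 : 0 ≤ Real.sqrt (12 / ((n:ℝ)^2 - 1)) := Real.sqrt_nonneg _
    have hX : |zf n q| ≤ Real.sqrt (12 / ((n:ℝ)^2 - 1)) * (((n:ℝ) - 1)/2) := by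
      rw [zf, abs_mul, abs_of_nonneg hs0]
      exact mul_le_mul_of_nonneg_left hcabs hs0
    have hsq : (Real.sqrt (12 / ((n:ℝ)^2 - 1)) * (((n:ℝ) - 1)/2))^2 ≤ 4 := by
      rw [mul_pow, Real.sq_sqrt ha]
      rw [div_pow, div_mul_eq_mul_div, div_le_iff₀ (by positivity)]
      nlinarith
    have hXpos : 0 ≤ Real.sqrt (12 / ((n:ℝ)^2 - 1)) * (((n:ℝ) - 1)/2) := by
      apply mul_nonneg hs0
      linarith
    nlinarith [hX, hsq, hXpos, abs_nonneg (zf n q)]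

end ZBound

section Connect

variable {k : ℕ}

lemma connectivity (n : ℕ) (π π₁ : Finset (Finset (Fin (2*k))))
    (hπ : IsSetPartition π) (hπ₁ : IsSetPartition π₁)
    (B : Finset (Fin (2*k))) (hB : IsJoinBlock π π₁ B)
    (jv : Fin (2*k) → Fin n)
    (hjv : ∀ p ∈ π₁, ∀ x ∈ p, ∀ y ∈ p, x ∈ B → y ∈ B → jv x = jv y)
    (hm : (π.filter (fun A => A ⊆ B)).Nonempty) :
    (B.image jv).card + (π.filter (fun A => A ⊆ B)).card ≤
      (∑ A ∈ π.filter (fun A => A ⊆ B), (A.image jv).card) + 1 := by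
  classical
  set 𝔅 := π.filter (fun A => A ⊆ B) with h𝔅
  obtain ⟨a₀, hB0⟩ := hB
  have hmemB : ∀ x, x ∈ B ↔ joinRel π π₁ a₀ x := by
    intro x
    rw [hB0, Finset.mem_filter]
    exact ⟨fun h => h.2, fun h => ⟨Finset.mem_univ _, h⟩⟩
  have hstep : ∀ x y, x ∈ B →
      ((∃ A ∈ π, x ∈ A ∧ y ∈ A) ∨ (∃ A ∈ π₁, x ∈ A ∧ y ∈ A)) → y ∈ B := by
    intro x y hx hr
    rw [hmemB] at hx ⊢
    exact Relation.EqvGen.trans _ _ _ hx (Relation.EqvGen.rel _ _ hr)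
  have hπclose : ∀ A ∈ π, ∀ x ∈ A, x ∈ B → A ⊆ B := by
    intro A hA x hxA hxB y hyA
    exact hstep x y hxB (Or.inl ⟨A, hA, hxA, hyA⟩)
  have hcoverB : ∀ x ∈ B, ∃ A ∈ 𝔅, x ∈ A := by
    intro x hx
    obtain ⟨A, ⟨hA, hxA⟩, -⟩ := hπ.2 x
    exact ⟨A, Finset.mem_filter.mpr ⟨hA, hπclose A hA x hxA hx⟩, hxA⟩
  have hBsub : ∀ A ∈ 𝔅, A ⊆ B := fun A hA => (Finset.mem_filter.mp hA).2
  -- extension lemma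
  have hext : ∀ T ⊆ 𝔅, T.Nonempty → T ≠ 𝔅 → ∃ A ∈ 𝔅, A ∉ T ∧
      ∃ w : Fin n, w ∈ A.image jv ∧ w ∈ (T.biUnion id).image jv := by
    intro T hT hTne hTne𝔅
    by_contra hcon
    set U := T.biUnion id with hU
    have hUB : U ⊆ B := by
      intro x hx
      rw [hU, Finset.mem_biUnion] at hx
      obtain ⟨A, hA, hxA⟩ := hx
      exact hBsub A (hT hA) hxA
    -- U is closed under one-step relations
    have hclosed : ∀ u v, ((∃ A ∈ π, u ∈ A ∧ v ∈ A) ∨ (∃ A ∈ π₁, u ∈ A ∧ v ∈ A)) →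
        (u ∈ U → v ∈ U) := by
      intro u v hr huU
      have huB : u ∈ B := hUB huU
      have hvB : v ∈ B := hstep u v huB hr
      obtain ⟨Av, hAv, hvAv⟩ := hcoverB v hvB
      by_cases hAvT : Av ∈ T
      · exact Finset.mem_biUnion.mpr ⟨Av, hAvT, hvAv⟩
      · exfalso
        rcases hr with ⟨A, hA, huA, hvA⟩ | ⟨p, hp, hup, hvp⟩
        · -- same π block : the block is the block of u, which is in T
          rw [hU, Finset.mem_biUnion] at huU
          obtain ⟨A', hA'T, huA'⟩ := huU
          have hA'π : A' ∈ π := (Finset.mem_filter.mp (hT hA'T)).1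
          obtain ⟨C, -, hu⟩ := hπ.2 u
          have : A = A' := by rw [hu A ⟨hA, huA⟩, hu A' ⟨hA'π, huA'⟩]
          subst this
          -- v ∈ A ∈ T
          exact hAvT (by
            have hAπ : A ∈ π := hA
            obtain ⟨C', -, hv⟩ := hπ.2 v
            have h1 : A = Av := by
              rw [hv A ⟨hAπ, hvA⟩, hv Av ⟨(Finset.mem_filter.mp hAv).1, hvAv⟩]
            exact h1 ▸ hA'T)
        · -- π₁ pair connecting Av to U
          have hw := hjv p hp v hvp u hup hvB huB
          have h2 : jv v ∈ (T.biUnion id).image jv := by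
            rw [hw]
            exact Finset.mem_image_of_mem jv huU
          exact hcon ⟨Av, hAv, hAvT, jv v, Finset.mem_image_of_mem jv hvAv, h2⟩
    have hclosed2 : ∀ u v, joinRel π π₁ u v → (u ∈ U ↔ v ∈ U) := by
      intro u v h
      induction h with
      | rel x y hr =>
        have hsym : (∃ A ∈ π, y ∈ A ∧ x ∈ A) ∨ (∃ A ∈ π₁, y ∈ A ∧ x ∈ A) := by
          rcases hr with ⟨A, hA, h1, h2⟩ | ⟨A, hA, h1, h2⟩
          · exact Or.inl ⟨A, hA, h2, h1⟩
          · exact Or.inr ⟨A, hA, h2, h1⟩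
        exact ⟨hclosed x y hr, hclosed y x hsym⟩
      | refl x => exact Iff.rfl
      | symm x y _ ih => exact ih.symm
      | trans x y z _ _ ih1 ih2 => exact ih1.trans ih2
    -- B ⊆ U
    have hBU : B ⊆ U := by
      obtain ⟨A₀, hA₀⟩ := hTne
      obtain ⟨u₀, hu₀⟩ := hπ.1 A₀ (Finset.mem_filter.mp (hT hA₀)).1
      have hu₀U : u₀ ∈ U := Finset.mem_biUnion.mpr ⟨A₀, hA₀, hu₀⟩
      have hu₀B : u₀ ∈ B := hUB hu₀U
      intro b hb
      have h1 : joinRel π π₁ a₀ u₀ := (hmemB u₀).mp hu₀B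
      have h2 : joinRel π π₁ a₀ b := (hmemB b).mp hb
      have h3 : joinRel π π₁ u₀ b :=
        Relation.EqvGen.trans _ _ _ (Relation.EqvGen.symm _ _ h1) h2
      exact (hclosed2 u₀ b h3).mp hu₀U
    -- contradiction : some block outside T
    obtain ⟨A, hA𝔅, hAT⟩ := Finset.exists_of_ssubset (lt_of_le_of_ne hT hTne𝔅)
    obtain ⟨x, hxA⟩ := hπ.1 A (Finset.mem_filter.mp hA𝔅).1
    have hxU : x ∈ U := hBU (hBsub A hA𝔅 hxA)
    rw [hU, Finset.mem_biUnion] at hxU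
    obtain ⟨A', hA'T, hxA'⟩ := hxU
    obtain ⟨C, -, hu⟩ := hπ.2 x
    have : A = A' := by
      rw [hu A ⟨(Finset.mem_filter.mp hA𝔅).1, hxA⟩,
        hu A' ⟨(Finset.mem_filter.mp (hT hA'T)).1, hxA'⟩]
    exact hAT (this ▸ hA'T)
  -- iterative construction
  have hmain : ∀ t : ℕ, t + 1 ≤ 𝔅.card → ∃ T, T ⊆ 𝔅 ∧ T.Nonempty ∧ T.card = t + 1 ∧
      ((T.biUnion id).image jv).card + t ≤ ∑ A ∈ T, (A.image jv).card := by
    intro t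
    induction t with
    | zero =>
      intro _
      obtain ⟨A₀, hA₀⟩ := hm
      refine ⟨{A₀}, Finset.singleton_subset_iff.mpr hA₀, ⟨A₀, Finset.mem_singleton_self _⟩,
        Finset.card_singleton _, ?_⟩
      rw [Finset.singleton_biUnion, Finset.sum_singleton]
      simp
    | succ t ih =>
      intro hcard
      obtain ⟨T, hT, hTne, hTcard, hTbound⟩ := ih (by omega)
      have hTne𝔅 : T ≠ 𝔅 := by
        intro h
        rw [h] at hTcard
        omega
      obtain ⟨A, hA𝔅, hAT, w, hwA, hwU⟩ := hext T hT hTne hTne𝔅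
      refine ⟨insert A T, Finset.insert_subset hA𝔅 hT,
        ⟨A, Finset.mem_insert_self _ _⟩, ?_, ?_⟩
      · rw [Finset.card_insert_of_notMem hAT, hTcard]
      · rw [Finset.biUnion_insert, Finset.sum_insert hAT, Finset.image_union]
        simp only [id_eq]
        have hcu := Finset.card_union_add_card_inter (A.image jv) ((T.biUnion id).image jv)
        have hint : 1 ≤ ((A.image jv) ∩ ((T.biUnion id).image jv)).card :=
          Finset.card_pos.mpr ⟨w, Finset.mem_inter.mpr ⟨hwA, hwU⟩⟩
        omega
  -- conclude
  have hBcard : 1 ≤ 𝔅.card := Finset.card_pos.mpr hm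
  obtain ⟨T, hT, hTne, hTcard, hTbound⟩ := hmain (𝔅.card - 1) (by omega)
  have hTeq : T = 𝔅 := Finset.eq_of_subset_of_card_le hT (by omega)
  rw [hTeq] at hTbound
  have hBeq : 𝔅.biUnion id = B := by
    apply Finset.Subset.antisymm
    · intro x hx
      rw [Finset.mem_biUnion] at hx
      obtain ⟨A, hA, hxA⟩ := hx
      exact hBsub A hA hxA
    · intro x hx
      obtain ⟨A, hA, hxA⟩ := hcoverB x hx
      exact Finset.mem_biUnion.mpr ⟨A, hA, hxA⟩
  rw [hBeq] at hTbound
  omega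

end Connect
section Counting

lemma counting {κ : Type*} [Fintype κ] [DecidableEq κ] {n : ℕ} (hn : 0 < n) :
    ∑ j : κ → Fin n, ((n:ℝ) ^ ((Finset.univ.image j).card))⁻¹ ≤
      ((Fintype.card κ + 1 : ℕ) : ℝ) ^ (Fintype.card κ + 1) := by
  classical
  set β := Fintype.card κ with hβ
  have hnR : (0:ℝ) < n := by exact_mod_cast hn
  -- fiberwise over the image
  have h1 : ∑ j : κ → Fin n, ((n:ℝ) ^ ((Finset.univ.image j).card))⁻¹ =
      ∑ V ∈ (Finset.univ : Finset (Finset (Fin n))),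
        ∑ j ∈ Finset.univ.filter (fun j : κ → Fin n => Finset.univ.image j = V),
          ((n:ℝ) ^ V.card)⁻¹ := by
    rw [Finset.sum_fiberwise_of_maps_to (fun j _ => Finset.mem_univ (Finset.univ.image j))
      (fun j => ((n:ℝ) ^ ((Finset.univ.image j).card))⁻¹) |>.symm]
    refine Finset.sum_congr rfl fun V _ => Finset.sum_congr rfl fun j hj => ?_
    rw [Finset.mem_filter] at hj
    rw [hj.2]
  rw [h1]
  -- bound each fiber
  have h2 : ∀ V : Finset (Fin n),
      ∑ j ∈ Finset.univ.filter (fun j : κ → Fin n => Finset.univ.image j = V),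
        ((n:ℝ) ^ V.card)⁻¹ ≤
      (if V.card ≤ β then (V.card ^ β : ℕ) * ((n:ℝ) ^ V.card)⁻¹ else 0) := by
    intro V
    rw [Finset.sum_const, nsmul_eq_mul]
    by_cases hVc : V.card ≤ β
    · rw [if_pos hVc]
      apply mul_le_mul_of_nonneg_right _ (by positivity)
      have hsub : Finset.univ.filter (fun j : κ → Fin n => Finset.univ.image j = V) ⊆
          Fintype.piFinset (fun _ : κ => V) := by
        intro j hj
        rw [Finset.mem_filter] at hj
        rw [Fintype.mem_piFinset]
        intro a
        rw [← hj.2]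
        exact Finset.mem_image_of_mem j (Finset.mem_univ a)
      have hcard := Finset.card_le_card hsub
      rw [Fintype.card_piFinset] at hcard
      simp only [Finset.prod_const, Finset.card_univ] at hcard
      exact_mod_cast hcard
    · rw [if_neg hVc]
      have hempty : Finset.univ.filter (fun j : κ → Fin n => Finset.univ.image j = V) = ∅ := by
        rw [Finset.filter_eq_empty_iff]
        intro j _
        intro h
        apply hVc
        rw [← h, hβ]
        exact le_trans (Finset.card_image_le) (by rw [Finset.card_univ])
      rw [hempty, Finset.card_empty]
      norm_num
  refine (Finset.sum_le_sum (fun V _ => h2 V)).trans ?_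
  -- group by cardinality
  rw [← Finset.powerset_univ, Finset.sum_powerset]
  have h3 : ∀ q ∈ Finset.range ((Finset.univ : Finset (Fin n)).card + 1),
      ∑ V ∈ Finset.powersetCard q (Finset.univ : Finset (Fin n)),
        (if V.card ≤ β then ((V.card ^ β : ℕ) : ℝ) * ((n:ℝ) ^ V.card)⁻¹ else 0) ≤
      (if q ≤ β then ((β ^ β : ℕ) : ℝ) else 0) := by
    intro q hq
    have hVq : ∀ V ∈ Finset.powersetCard q (Finset.univ : Finset (Fin n)), V.card = q :=
      fun V hV => (Finset.mem_powersetCard.mp hV).2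
    by_cases hqβ : q ≤ β
    · calc ∑ V ∈ Finset.powersetCard q (Finset.univ : Finset (Fin n)),
            (if V.card ≤ β then ((V.card ^ β : ℕ) : ℝ) * ((n:ℝ) ^ V.card)⁻¹ else 0)
          = ∑ V ∈ Finset.powersetCard q (Finset.univ : Finset (Fin n)),
            ((q ^ β : ℕ) : ℝ) * ((n:ℝ) ^ q)⁻¹ := by
            refine Finset.sum_congr rfl fun V hV => ?_
            rw [hVq V hV, if_pos hqβ]
        _ = (n.choose q : ℝ) * (((q ^ β : ℕ) : ℝ) * ((n:ℝ) ^ q)⁻¹) := by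
            rw [Finset.sum_const, Finset.card_powersetCard, Finset.card_univ,
              Fintype.card_fin, nsmul_eq_mul]
        _ ≤ ((n ^ q : ℕ) : ℝ) * (((q ^ β : ℕ) : ℝ) * ((n:ℝ) ^ q)⁻¹) := by
            apply mul_le_mul_of_nonneg_right _ (by positivity)
            exact_mod_cast le_trans (Nat.choose_le_descFactorial n q)
              (Nat.descFactorial_le_pow n q)
        _ = ((q ^ β : ℕ) : ℝ) := by
            push_cast
            field_simp
        _ ≤ (if q ≤ β then ((β ^ β : ℕ) : ℝ) else 0) := by
            rw [if_pos hqβ]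
            exact_mod_cast Nat.pow_le_pow_left hqβ β
    · calc ∑ V ∈ Finset.powersetCard q (Finset.univ : Finset (Fin n)),
            (if V.card ≤ β then ((V.card ^ β : ℕ) : ℝ) * ((n:ℝ) ^ V.card)⁻¹ else 0)
          = 0 := by
            refine Finset.sum_eq_zero fun V hV => ?_
            rw [hVq V hV, if_neg hqβ]
        _ ≤ _ := by
            rw [if_neg hqβ]
  refine (Finset.sum_le_sum h3).trans ?_
  -- final count
  rw [← Finset.sum_filter, Finset.sum_const, nsmul_eq_mul]
  have hc : ((Finset.range ((Finset.univ : Finset (Fin n)).card + 1)).filter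
      (fun q => q ≤ β)).card ≤ β + 1 := by
    have hsub : (Finset.range ((Finset.univ : Finset (Fin n)).card + 1)).filter
        (fun q => q ≤ β) ⊆ Finset.range (β+1) := by
      intro q hq
      rw [Finset.mem_filter] at hq
      rw [Finset.mem_range]
      omega
    exact le_trans (Finset.card_le_card hsub) (by rw [Finset.card_range])
  have hnat : (β + 1) * β ^ β ≤ (β + 1)^(β+1) := by
    rw [pow_succ, mul_comm ((β+1)^β) (β+1)]
    exact Nat.mul_le_mul_left _ (Nat.pow_le_pow_left (Nat.le_succ β) β)
  calc (((Finset.range ((Finset.univ : Finset (Fin n)).card + 1)).filter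
        (fun q => q ≤ β)).card : ℝ) * ((β ^ β : ℕ) : ℝ)
      ≤ ((β + 1 : ℕ) : ℝ) * ((β ^ β : ℕ) : ℝ) := by
        apply mul_le_mul_of_nonneg_right _ (by positivity)
        exact_mod_cast hc
    _ ≤ ((β + 1 : ℕ) : ℝ) ^ (β + 1) := by
        rw [← Nat.cast_mul, ← Nat.cast_pow]
        exact_mod_cast hnat

end Counting

set_option maxHeartbeats 1600000 in
/-- Proposition 4.7 (special case) -/
theorem spearman_block_sum_bound_special (k : ℕ) (hk : 0 < k)
    (π π₁ : Finset (Finset (Fin (2 * k))))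
    (hπ : IsSetPartition π) (heven : ∀ A ∈ π, Even A.card)
    (hπ₁ : IsPerfectMatching π₁)
    (B : Finset (Fin (2 * k))) (hB : IsJoinBlock π π₁ B)
    (hone : (π.filter fun A => A ⊆ B ∧ 3 ≤ A.card / 2).card = 1)
    (hno2 : (π.filter fun A => A ⊆ B ∧ A.card / 2 = 2).card = 0) :
    ∃ C : ℝ, ∀ n : ℕ,
      (∑ j ∈ Finset.univ.filter
          (fun j : {x // x ∈ B} → Fin n =>
            ∀ a b : {x // x ∈ B}, (∃ A ∈ π₁, a.1 ∈ A ∧ b.1 ∈ A) → j a = j b),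
        ∏ A ∈ (π.filter fun A => A ⊆ B).attach,
          |jointCumulant (permMeasure n)
            (fun a : {x // x ∈ A.1} =>
              Zr n (j ⟨a.1, (Finset.mem_filter.mp A.2).2 a.2⟩))|) ≤
      C * (n : ℝ) ^
        (∑ A ∈ π.filter (fun A => A ⊆ B),
          (if 2 ≤ A.card / 2 then A.card / 2 - 2 else 0)) := by
  classical
  obtain ⟨A₀, hA₀eq⟩ := Finset.card_eq_one.mp hone
  have hA₀mem : A₀ ∈ π.filter (fun A => A ⊆ B ∧ 3 ≤ A.card / 2) :=
    hA₀eq ▸ Finset.mem_singleton_self A₀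
  rw [Finset.mem_filter] at hA₀mem
  obtain ⟨hA₀π, hA₀B, hA₀big⟩ := hA₀mem
  obtain ⟨x₀, hx₀A⟩ := hπ.1 A₀ hA₀π
  have hx₀B : x₀ ∈ B := hA₀B hx₀A
  have hm : (π.filter (fun A => A ⊆ B)).Nonempty :=
    ⟨A₀, Finset.mem_filter.mpr ⟨hA₀π, hA₀B⟩⟩
  set m := (π.filter (fun A => A ⊆ B)).card with hmdef
  have hm1 : 1 ≤ m := Finset.card_pos.mpr hm
  set E := ∑ A ∈ π.filter (fun A => A ⊆ B),
    (if 2 ≤ A.card / 2 then A.card / 2 - 2 else 0) with hE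
  have hE1 : 1 ≤ E := by
    have hmem : A₀ ∈ π.filter (fun A => A ⊆ B) := Finset.mem_filter.mpr ⟨hA₀π, hA₀B⟩
    have h := Finset.single_le_sum
      (f := fun A : Finset (Fin (2*k)) => if 2 ≤ A.card / 2 then A.card / 2 - 2 else 0)
      (fun A _ => Nat.zero_le _) hmem
    have h' : (if 2 ≤ A₀.card / 2 then A₀.card / 2 - 2 else 0) ≤ E := h
    rw [if_pos (by omega)] at h'
    omega
  obtain ⟨Mdec, hMdec0, hMdec⟩ := decay (ι := Fin (2*k)) (4*k)
  set β := B.card with hβ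
  set M2 : ℝ := Mdec * 2^(2*k) with hM2
  have hM20 : 0 ≤ M2 := by positivity
  refine ⟨M2^m * ((β + 1 : ℕ):ℝ)^(β+1), ?_⟩
  intro n
  rcases Nat.eq_zero_or_pos n with hn0 | hn
  · subst hn0
    have hie : IsEmpty ({x // x ∈ B} → Fin 0) := ⟨fun j => (j ⟨x₀, hx₀B⟩).elim0⟩
    rw [Finset.univ_eq_empty, Finset.filter_empty, Finset.sum_empty,
      Nat.cast_zero, zero_pow (by omega), mul_zero]
  · have hnR : (0:ℝ) < n := by exact_mod_cast hn
    have hn1 : (1:ℝ) ≤ n := by exact_mod_cast hn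
    -- the per-word bound
    have hword : ∀ j ∈ Finset.univ.filter
        (fun j : {x // x ∈ B} → Fin n =>
          ∀ a b : {x // x ∈ B}, (∃ A ∈ π₁, a.1 ∈ A ∧ b.1 ∈ A) → j a = j b),
        (∏ A ∈ (π.filter fun A => A ⊆ B).attach,
          |jointCumulant (permMeasure n)
            (fun a : {x // x ∈ A.1} =>
              Zr n (j ⟨a.1, (Finset.mem_filter.mp A.2).2 a.2⟩))|) ≤
        M2^m * n * (((n:ℝ)^((Finset.univ.image j).card))⁻¹) := by
      intro j hj
      set jv : Fin (2*k) → Fin n :=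
        fun i => if h : i ∈ B then j ⟨i, h⟩ else ⟨0, hn⟩ with hjv
      have hjvB : ∀ (i : Fin (2*k)) (h : i ∈ B), jv i = j ⟨i, h⟩ := by
        intro i h
        rw [hjv]
        dsimp only
        rw [dif_pos h]
      -- rewrite the product through the bridge
      have hprodeq : (∏ A ∈ (π.filter fun A => A ⊆ B).attach,
          |jointCumulant (permMeasure n)
            (fun a : {x // x ∈ A.1} =>
              Zr n (j ⟨a.1, (Finset.mem_filter.mp A.2).2 a.2⟩))|) =
          ∏ A ∈ π.filter (fun A => A ⊆ B),
            |cum n A (fun i σ => zf n (σ (jv i)))| := by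
        rw [← Finset.prod_attach (π.filter fun A => A ⊆ B)
          (fun A => |cum n A (fun i σ => zf n (σ (jv i)))|)]
        refine Finset.prod_congr rfl fun A _ => ?_
        congr 1
        have hfun : (fun a : {x // x ∈ A.1} =>
            Zr n (j ⟨a.1, (Finset.mem_filter.mp A.2).2 a.2⟩)) =
            (fun a : {x // x ∈ A.1} =>
              (fun i σ => zf n (σ (jv i))) a.1) := by
          funext a
          funext σ
          rw [Zr_eq_zf]
          congr 2
          rw [hjvB a.1 ((Finset.mem_filter.mp A.2).2 a.2)]
        rw [hfun]
        exact bridge n A.1 (fun i σ => zf n (σ (jv i)))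
      rw [hprodeq]
      -- per-block decay bound
      have hblock : ∀ A ∈ π.filter (fun A => A ⊆ B),
          |cum n A (fun i σ => zf n (σ (jv i)))| * (n:ℝ)^((A.image jv).card) ≤
          M2 * n := by
        intro A hA
        have hAπ : A ∈ π := (Finset.mem_filter.mp hA).1
        have hAcard : A.card ≤ 2*k := by
          have h := Finset.card_le_univ A
          simp only [Finset.card_univ, Fintype.card_fin] at h
          exact h
        have h := hMdec n A (fun _ => zf n) jv (fun _ => (2:ℝ)) (hπ.1 A hAπ)
          (fun _ _ => by norm_num) (fun i _ q => zf_abs_le n q) ?_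
        swap
        · have := Finset.card_image_le (f := jv) (s := A)
          omega
        refine h.trans ?_
        rw [Finset.prod_const]
        have h2 : ((2:ℝ))^A.card ≤ 2^(2*k) := pow_le_pow_right₀ one_le_two hAcard
        calc (Mdec * (2:ℝ)^A.card) * n ≤ (Mdec * 2^(2*k)) * n := by
              apply mul_le_mul_of_nonneg_right _ (le_of_lt hnR)
              exact mul_le_mul_of_nonneg_left h2 hMdec0
          _ = M2 * n := by rw [hM2]
      -- multiply over the blocks
      have hprodle : (∏ A ∈ π.filter (fun A => A ⊆ B),
          |cum n A (fun i σ => zf n (σ (jv i)))|) *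
          (n:ℝ)^(∑ A ∈ π.filter (fun A => A ⊆ B), (A.image jv).card) ≤
          M2^m * (n:ℝ)^m := by
        calc (∏ A ∈ π.filter (fun A => A ⊆ B),
              |cum n A (fun i σ => zf n (σ (jv i)))|) *
              (n:ℝ)^(∑ A ∈ π.filter (fun A => A ⊆ B), (A.image jv).card)
            = ∏ A ∈ π.filter (fun A => A ⊆ B),
              (|cum n A (fun i σ => zf n (σ (jv i)))| * (n:ℝ)^((A.image jv).card)) := by
              rw [Finset.prod_mul_distrib, Finset.prod_pow_eq_pow_sum]
          _ ≤ ∏ _A ∈ π.filter (fun A => A ⊆ B), (M2 * (n:ℝ)) :=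
              Finset.prod_le_prod (fun A _ => by positivity) hblock
          _ = M2^m * (n:ℝ)^m := by
              rw [Finset.prod_const, mul_pow, hmdef]
      -- connectivity
      have hjvmeas : ∀ p ∈ π₁, ∀ x ∈ p, ∀ y ∈ p, x ∈ B → y ∈ B → jv x = jv y := by
        intro p hp x hx y hy hxB hyB
        have h := (Finset.mem_filter.mp hj).2 ⟨x, hxB⟩ ⟨y, hyB⟩ ⟨p, hp, hx, hy⟩
        rw [hjvB x hxB, hjvB y hyB]
        exact h
      have hconn := connectivity n π π₁ hπ hπ₁.1 B hB jv hjvmeas hm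
      -- cancel and conclude
      have himg : B.image jv = Finset.univ.image j := by
        ext w
        simp only [Finset.mem_image, Finset.mem_univ, true_and]
        constructor
        · rintro ⟨i, hiB, rfl⟩
          exact ⟨⟨i, hiB⟩, (hjvB i hiB).symm⟩
        · rintro ⟨a, rfl⟩
          exact ⟨a.1, a.2, hjvB a.1 a.2⟩
      set P := ∏ A ∈ π.filter (fun A => A ⊆ B),
        |cum n A (fun i σ => zf n (σ (jv i)))| with hP
      have hP0 : 0 ≤ P := Finset.prod_nonneg (fun A _ => abs_nonneg _)
      set D := (Finset.univ.image j).card with hD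
      have hDconn : D + m ≤ (∑ A ∈ π.filter (fun A => A ⊆ B), (A.image jv).card) + 1 := by
        rw [hD, ← himg]
        exact hconn
      have hstep1 : P * (n:ℝ)^(D + m - 1) ≤ M2^m * (n:ℝ)^m := by
        refine le_trans ?_ hprodle
        apply mul_le_mul_of_nonneg_left _ hP0
        apply pow_le_pow_right₀ hn1
        omega
      have hstep2 : P * (n:ℝ)^D ≤ M2^m * n := by
        have hpm : (0:ℝ) < (n:ℝ)^(m-1) := by positivity
        apply le_of_mul_le_mul_right _ hpm
        calc P * (n:ℝ)^D * (n:ℝ)^(m-1)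
            = P * (n:ℝ)^(D + m - 1) := by
              rw [mul_assoc, ← pow_add]
              congr 2
              omega
          _ ≤ M2^m * (n:ℝ)^m := hstep1
          _ = M2^m * n * (n:ℝ)^(m-1) := by
              rw [mul_assoc]
              congr 1
              rw [← pow_succ']
              congr 1
              omega
      have hpD : (0:ℝ) < (n:ℝ)^D := by positivity
      rw [← le_div_iff₀ hpD] at hstep2
      rw [div_eq_mul_inv] at hstep2
      exact hstep2
    -- sum the per-word bounds
    calc (∑ j ∈ Finset.univ.filter
          (fun j : {x // x ∈ B} → Fin n =>
            ∀ a b : {x // x ∈ B}, (∃ A ∈ π₁, a.1 ∈ A ∧ b.1 ∈ A) → j a = j b),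
        ∏ A ∈ (π.filter fun A => A ⊆ B).attach,
          |jointCumulant (permMeasure n)
            (fun a : {x // x ∈ A.1} =>
              Zr n (j ⟨a.1, (Finset.mem_filter.mp A.2).2 a.2⟩))|)
        ≤ ∑ j ∈ Finset.univ.filter
          (fun j : {x // x ∈ B} → Fin n =>
            ∀ a b : {x // x ∈ B}, (∃ A ∈ π₁, a.1 ∈ A ∧ b.1 ∈ A) → j a = j b),
          M2^m * n * (((n:ℝ)^((Finset.univ.image j).card))⁻¹) :=
          Finset.sum_le_sum hword
      _ ≤ ∑ j : {x // x ∈ B} → Fin n,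
          M2^m * n * (((n:ℝ)^((Finset.univ.image j).card))⁻¹) := by
          apply Finset.sum_le_sum_of_subset_of_nonneg (Finset.filter_subset _ _)
          intro j _ _
          positivity
      _ = M2^m * n * ∑ j : {x // x ∈ B} → Fin n,
          (((n:ℝ)^((Finset.univ.image j).card))⁻¹) := by
          rw [Finset.mul_sum]
      _ ≤ M2^m * n * (((β + 1 : ℕ):ℝ)^(β+1)) := by
          apply mul_le_mul_of_nonneg_left _ (by positivity)
          have hcount := counting (κ := {x // x ∈ B}) (n := n) hn
          rwa [Fintype.card_coe] at hcount
      _ ≤ M2^m * ((β + 1 : ℕ):ℝ)^(β+1) * (n:ℝ)^E := by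
          have hnE : (n:ℝ) ≤ (n:ℝ)^E := by
            calc (n:ℝ) = (n:ℝ)^1 := (pow_one _).symm
              _ ≤ (n:ℝ)^E := pow_le_pow_right₀ hn1 hE1
          calc M2^m * n * (((β + 1 : ℕ):ℝ)^(β+1))
              = (M2^m * ((β + 1 : ℕ):ℝ)^(β+1)) * n := by ring
            _ ≤ (M2^m * ((β + 1 : ℕ):ℝ)^(β+1)) * (n:ℝ)^E := by
                apply mul_le_mul_of_nonneg_left hnE (by positivity)

end
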